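/- arXiv:1309.1761 — 10 statements merged into one kernel-verified Lean document; each statement's English description precedes it below -/
import Mathlib

section
/- Let {z_n} be generated by the selective sampling process S(κ,Φ) where Φ(x,S) = inf{d(x,s) : s ∈ S} is the distance-to-sample-set heuristic and κ satisfies Σ_{n=1}^∞ ρ^{κ(n)} = ∞ for every 0 < ρ ≤ 1. If x ∈ supp(μ) is not an f-boundary point, then the nearest neighbor predictions satisfy ζ_n(x) → f(x) with probability one. -/
open MeasureTheory ProbabilityTheory Filter Metric

/-- The support of a measure on a metric space: points all of whose open balls
have positive measure. -/
def measSupport {X : Type*} [MetricSpace X] [MeasurableSpace X]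
    (μ : Measure X) : Set X :=
  {x | ∀ ε > 0, 0 < μ (ball x ε)}

/-- `b` is an `f`-boundary point iff every ball about `b` meets the set of points
with a different `f`-value in positive measure. -/
def IsFBoundaryPoint {X Y : Type*} [MetricSpace X] [MeasurableSpace X]
    (f : X → Y) (μ : Measure X) (b : X) : Prop :=
  ∀ ε > 0, 0 < μ (ball b ε ∩ {x | f x ≠ f b})

/-- The sample set `Z_n(ω) = {z_1(ω), …, z_n(ω)}`. -/
def sampleSet {X Ω : Type*} (z : ℕ → Ω → X) (n : ℕ) (ω : Ω) : Set X :=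
  {p | ∃ k, 1 ≤ k ∧ k ≤ n ∧ z k ω = p}

/-- **Convergence of the distance-to-sample-set heuristic.**
If the samples are generated by the selective sampling process `S(κ, Φ)` with
`Φ(x, S) = d(x, S)` and `∑ ρ^{κ(n)} = ∞` for all `0 < ρ ≤ 1`, then at every
point `x` of the support of `μ` that is not an `f`-boundary point, the nearest
neighbor predictions `ζ_n(x)` converge to `f(x)` with probability one. -/
theorem dist_heuristic_pointwise_convergence
    {X : Type*} [MetricSpace X] [MeasurableSpace X] [BorelSpace X]
    {Y : Type*} [Countable Y]
    (μ : Measure X) [IsProbabilityMeasure μ] (f : X → Y)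
    {Ω : Type*} [MeasurableSpace Ω] (P : Measure Ω) [IsProbabilityMeasure P]
    -- the candidate-count function κ : ℕ⁺ → ℕ⁺ (κ (n+1) candidates at step n+1)
    (κ : ℕ → ℕ) (hκpos : ∀ n, 1 ≤ κ n)
    (hκ : ∀ ρ : ℝ, 0 < ρ → ρ ≤ 1 →
      Tendsto (fun N => ∑ n ∈ Finset.Icc 1 N, ρ ^ κ n) atTop atTop)
    -- at step n+1, κ(n+1) candidates are drawn, iid with law μ
    (cand : (n : ℕ) → Fin (κ (n + 1)) → Ω → X)
    (hmeas : ∀ n i, Measurable (cand n i))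
    (hlaw : ∀ n i, P.map (cand n i) = μ)
    (hindep : iIndepFun
      (fun p : Σ n : ℕ, Fin (κ (n + 1)) => cand p.1 p.2) P)
    -- the sample z_{n+1} is a candidate maximizing Φ(·, Z_n) = d(·, Z_n)
    (z : ℕ → Ω → X)
    (hsel : ∀ ω n, ∃ i : Fin (κ (n + 1)), z (n + 1) ω = cand n i ω ∧
      ∀ j : Fin (κ (n + 1)),
        infDist (cand n j ω) (sampleSet z n ω) ≤
          infDist (cand n i ω) (sampleSet z n ω))
    -- ζ_n is a nearest neighbor prediction over Z_n (ties broken arbitrarily)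
    (ζ : ℕ → Ω → X → Y)
    (hζ : ∀ ω x n, 1 ≤ n → ∃ i, 1 ≤ i ∧ i ≤ n ∧
      (∀ j, 1 ≤ j → j ≤ n → dist x (z i ω) ≤ dist x (z j ω)) ∧
      ζ n ω x = f (z i ω))
    (x : X) (hx : x ∈ measSupport μ) (hxb : ¬ IsFBoundaryPoint f μ x) :
    ∀ᵐ ω ∂P, ∀ᶠ n in atTop, ζ n ω x = f x := by
  classical
  -- Extract ε from non-boundary hypothesis
  simp only [IsFBoundaryPoint, not_forall] at hxb
  obtain ⟨ε, hε, hNnull⟩ := hxb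
  have hNnull : μ (ball x ε ∩ {x' | f x' ≠ f x}) = 0 :=
    le_antisymm (not_lt.mp hNnull) (zero_le)
  -- measurable null superset
  obtain ⟨N', hNsub, hN'meas, hN'0⟩ := exists_measurable_superset_of_null hNnull
  -- basic facts about p = μ (ball x ε)
  set p : ENNReal := μ (ball x ε) with hp
  have hp0 : 0 < p := hx ε hε
  have hp1 : p ≤ 1 := prob_le_one
  have hptop : p ≠ ⊤ := (lt_of_le_of_lt hp1 ENNReal.one_lt_top).ne
  -- preimage measure computation
  have hpre : ∀ n i (s : Set X), MeasurableSet s → P ((cand n i) ⁻¹' s) = μ s := by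
    intro n i s hs
    rw [← hlaw n i, Measure.map_apply (hmeas n i) hs]
  -- the events
  set F : ℕ → Set Ω := fun n => ⋂ i : Fin (κ (n + 1)), (cand n i) ⁻¹' (ball x ε) with hF
  have hFmeas : ∀ n, MeasurableSet (F n) := fun n =>
    MeasurableSet.iInter fun i => (hmeas n i) measurableSet_ball
  -- key independence computation
  have key : ∀ T : Finset ℕ, P (⋂ n ∈ T, F n) = ∏ n ∈ T, p ^ κ (n + 1) := by
    intro T
    have h1 : (⋂ n ∈ T, F n) =
        ⋂ q ∈ T.sigma (fun n => (Finset.univ : Finset (Fin (κ (n + 1))))),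
          (fun q : Σ n : ℕ, Fin (κ (n + 1)) => cand q.1 q.2) q ⁻¹' (ball x ε) := by
      ext ω
      simp only [Set.mem_iInter, Finset.mem_sigma, Finset.mem_univ, and_true, hF,
        Set.mem_preimage, Sigma.forall]
      constructor
      · intro h q i hq; exact h q hq i
      · intro h q hq i; exact h q i hq
    rw [h1, hindep.measure_inter_preimage_eq_mul (T.sigma fun n => Finset.univ)
      (fun q _ => measurableSet_ball (x := x) (ε := ε)), Finset.prod_sigma]
    refine Finset.prod_congr rfl fun n _ => ?_
    rw [Finset.prod_congr rfl fun (i : Fin (κ (n + 1))) _ =>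
      hpre n i (ball x ε) measurableSet_ball]
    simp [Finset.prod_const, hp]
  have PF : ∀ n, P (F n) = p ^ κ (n + 1) := by
    intro n
    have := key {n}
    simpa using this
  -- independence of the events
  have hind : iIndepSet F P := by
    rw [iIndepSet_iff_meas_biInter hFmeas]
    intro T
    rw [key T]
    exact Finset.prod_congr rfl fun n _ => (PF n).symm
  -- divergence of the sum
  have htsum : (∑' n, P (F n)) = ⊤ := by
    simp_rw [PF]
    by_contra hne
    set C := ∑' n, p ^ κ (n + 1) with hC
    have hbound : ∀ N : ℕ, ∑ n ∈ Finset.range N, (p.toReal) ^ κ (n + 1) ≤ C.toReal := by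
      intro N
      have h1 : ∑ n ∈ Finset.range N, (p.toReal) ^ κ (n + 1)
          = (∑ n ∈ Finset.range N, p ^ κ (n + 1)).toReal := by
        rw [ENNReal.toReal_sum (fun n _ => (ENNReal.pow_ne_top hptop))]
        simp [ENNReal.toReal_pow]
      rw [h1]
      exact ENNReal.toReal_mono hne (ENNReal.sum_le_tsum _)
    have hρ0 : 0 < p.toReal := ENNReal.toReal_pos hp0.ne' hptop
    have hρ1 : p.toReal ≤ 1 := by
      have := ENNReal.toReal_mono (by norm_num) hp1
      simpa using this
    have hdiv := hκ p.toReal hρ0 hρ1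
    have heq : ∀ N : ℕ, ∑ n ∈ Finset.Icc 1 N, (p.toReal) ^ κ n
        = ∑ n ∈ Finset.range N, (p.toReal) ^ κ (n + 1) := by
      intro N
      rw [← Finset.Ico_add_one_right_eq_Icc, Finset.sum_Ico_eq_sum_range]
      simp [add_comm 1]
    obtain ⟨N, hN⟩ := (hdiv.eventually (eventually_gt_atTop C.toReal)).exists
    rw [heq N] at hN
    exact absurd (hbound N) (not_le.mpr hN)
  -- second Borel-Cantelli
  have hlimsup : P (limsup F atTop) = 1 := measure_limsup_eq_one hFmeas hind htsum
  have haelimsup : ∀ᵐ ω ∂P, ω ∈ limsup F atTop :=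
    (mem_ae_iff_prob_eq_one (MeasurableSet.measurableSet_limsup hFmeas)).mpr hlimsup
  -- a.s. all candidates avoid the null set N'
  have haeN : ∀ᵐ ω ∂P, ∀ n i, cand n i ω ∉ N' := by
    rw [ae_all_iff]
    intro n
    rw [ae_all_iff]
    intro i
    have h0 : P ((cand n i) ⁻¹' N') = 0 := by rw [hpre n i N' hN'meas]; exact hN'0
    exact (measure_eq_zero_iff_ae_notMem.mp h0)
  filter_upwards [haelimsup, haeN] with ω hωF hωN
  rw [mem_limsup_iff_frequently_mem] at hωF
  obtain ⟨n₀, hn₀⟩ := hωF.exists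
  simp only [hF, Set.mem_iInter, Set.mem_preimage] at hn₀
  -- the sample z (n₀ + 1) lies in ball x ε
  obtain ⟨i₀, hzi₀, -⟩ := hsel ω n₀
  have hzball : dist x (z (n₀ + 1) ω) < ε := by
    rw [hzi₀, dist_comm]
    exact hn₀ i₀
  rw [eventually_atTop]
  refine ⟨n₀ + 1, fun n hn => ?_⟩
  obtain ⟨i, hi1, hin, hmin, hζeq⟩ := hζ ω x n (le_trans (Nat.le_add_left 1 n₀) hn)
  rw [hζeq]
  have hdi : dist x (z i ω) < ε :=
    lt_of_le_of_lt (hmin (n₀ + 1) (Nat.le_add_left 1 n₀) hn) hzball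
  -- z i ω is a candidate, hence avoids N'
  obtain ⟨m, rfl⟩ : ∃ m, i = m + 1 := ⟨i - 1, by omega⟩
  obtain ⟨j, hzj, -⟩ := hsel ω m
  have hnotN' : z (m + 1) ω ∉ N' := by rw [hzj]; exact hωN m j
  have hnotN : z (m + 1) ω ∉ ball x ε ∩ {x' | f x' ≠ f x} := fun h => hnotN' (hNsub h)
  by_contra hne
  exact hnotN ⟨by rwa [mem_ball, dist_comm], hne⟩
end

section
/- Let {z_n} be generated by the selective sampling process S(κ,Φ) where Φ(x,S) = inf{d(x,s) : s ∈ S} is the distance-to-sample-set heuristic and κ satisfies Σ_{n=1}^∞ ρ^{κ(n)} = ∞ for every 0 < ρ ≤ 1. If X is separable and the set of f-boundary points has μ-measure zero, then with probability one, ζ_n(x) → f(x) for μ-almost every x ∈ X (i.e., ζ_n → f in measure). -/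
open MeasureTheory ProbabilityTheory Filter Metric
open scoped ENNReal

/-- Auxiliary covering lemma: if every point of `W ⊆ S` has a ball whose
intersection with `S` is null, then `W` is null. -/
lemma aux_null_of_locally_null {X : Type*} [MetricSpace X] [MeasurableSpace X]
    [TopologicalSpace.SeparableSpace X] (μ : Measure X) (S W : Set X) (hWS : W ⊆ S)
    (h : ∀ x ∈ W, ∃ ε > 0, μ (ball x ε ∩ S) = 0) : μ W = 0 := by
  haveI := UniformSpace.secondCountable_of_separable X
  apply measure_null_of_locally_null
  intro x hx
  obtain ⟨ε, hε, h0⟩ := h x hx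
  refine ⟨ball x ε ∩ S, ?_, h0⟩
  refine Filter.mem_of_superset
    (Filter.inter_mem (mem_nhdsWithin_of_mem_nhds (ball_mem_nhds x hε)) self_mem_nhdsWithin) ?_
  exact Set.inter_subset_inter_right _ hWS

/-- Auxiliary Borel–Cantelli lemma: a.s. some sample lands in any fixed
positive-measure measurable set. -/
lemma aux_hit {X : Type*} [MetricSpace X] [MeasurableSpace X] [BorelSpace X]
    (μ : Measure X) [IsProbabilityMeasure μ]
    {Ω : Type*} [MeasurableSpace Ω] (P : Measure Ω) [IsProbabilityMeasure P]
    (κ : ℕ → ℕ)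
    (hκ : ∀ ρ : ℝ, 0 < ρ → ρ ≤ 1 →
      Tendsto (fun N => ∑ n ∈ Finset.Icc 1 N, ρ ^ κ n) atTop atTop)
    (cand : (n : ℕ) → Fin (κ (n + 1)) → Ω → X)
    (hmeas : ∀ n i, Measurable (cand n i))
    (hlaw : ∀ n i, P.map (cand n i) = μ)
    (hindep : iIndepFun
      (fun p : Σ n : ℕ, Fin (κ (n + 1)) => cand p.1 p.2) P)
    (z : ℕ → Ω → X)
    (hz : ∀ ω n, ∃ i : Fin (κ (n + 1)), z (n + 1) ω = cand n i ω)
    (B : Set X) (hB : MeasurableSet B) (hBpos : 0 < μ B) :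
    ∀ᵐ ω ∂P, ∃ k, 1 ≤ k ∧ z k ω ∈ B := by
  set E : ℕ → Set Ω := fun n => ⋂ i : Fin (κ (n + 1)), cand n i ⁻¹' B with hE
  have hEmeas : ∀ n, MeasurableSet (E n) :=
    fun n => MeasurableSet.iInter fun i => (hmeas n i) hB
  have key : ∀ s : Finset ℕ,
      P (⋂ n ∈ s, E n) = ∏ n ∈ s, (μ B) ^ (κ (n + 1)) := by
    intro s
    have hprod := hindep.meas_biInter
      (S := s.sigma fun n => (Finset.univ : Finset (Fin (κ (n + 1)))))
      (s := fun p => cand p.1 p.2 ⁻¹' B)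
      (fun p _ => ⟨B, hB, rfl⟩)
    have hset : (⋂ p ∈ s.sigma fun n => (Finset.univ : Finset (Fin (κ (n + 1)))),
        cand p.1 p.2 ⁻¹' B) = ⋂ n ∈ s, E n := by
      ext ω
      constructor
      · intro h
        refine Set.mem_iInter₂.2 fun n hn => Set.mem_iInter.2 fun i => ?_
        exact Set.mem_iInter₂.1 h ⟨n, i⟩ (Finset.mem_sigma.2 ⟨hn, Finset.mem_univ _⟩)
      · intro h
        refine Set.mem_iInter₂.2 fun p hp => ?_
        exact Set.mem_iInter.1 (Set.mem_iInter₂.1 h p.1 (Finset.mem_sigma.1 hp).1) p.2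
    rw [hset] at hprod
    rw [hprod, Finset.prod_sigma]
    refine Finset.prod_congr rfl fun n _ => ?_
    have hone : ∀ i : Fin (κ (n + 1)), P (cand n i ⁻¹' B) = μ B := fun i => by
      rw [← hlaw n i, Measure.map_apply (hmeas n i) hB]
    simp [hone, Finset.prod_const, Finset.card_univ]
  have hPE : ∀ n, P (E n) = (μ B) ^ (κ (n + 1)) := by
    intro n
    have := key {n}
    simpa using this
  have hind : iIndepSet E P := by
    rw [iIndepSet_iff_meas_biInter hEmeas]
    intro s
    rw [key s]
    exact Finset.prod_congr rfl fun n _ => (hPE n).symm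
  have htop : (∑' n, P (E n)) = ∞ := by
    by_contra h
    have hsummable : Summable fun n => (P (E n)).toReal := ENNReal.summable_toReal h
    set ρ := (μ B).toReal with hρ
    have hρpos : 0 < ρ := ENNReal.toReal_pos hBpos.ne' (measure_ne_top μ B)
    have hρle : ρ ≤ 1 := by
      have := ENNReal.toReal_mono ENNReal.one_ne_top (prob_le_one (μ := μ) (s := B))
      simpa using this
    have hterm : ∀ n, (P (E n)).toReal = ρ ^ κ (n + 1) := by
      intro n
      rw [hPE n, ENNReal.toReal_pow]
    have hb : ∀ N, ∑ n ∈ Finset.Icc 1 N, ρ ^ κ n ≤ ∑' n, (P (E n)).toReal := by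
      intro N
      have h1 : Finset.Icc 1 N = Finset.Ico 1 (N + 1) := by
        rw [Finset.Ico_add_one_right_eq_Icc]
      rw [h1, Finset.sum_Ico_eq_sum_range]
      have h2 : ∀ i, ρ ^ κ (1 + i) = (P (E i)).toReal := by
        intro i
        rw [hterm i, Nat.add_comm]
      calc ∑ i ∈ Finset.range (N + 1 - 1), ρ ^ κ (1 + i)
          = ∑ i ∈ Finset.range (N + 1 - 1), (P (E i)).toReal := by
            exact Finset.sum_congr rfl fun i _ => h2 i
        _ ≤ ∑' n, (P (E n)).toReal :=
            Summable.sum_le_tsum _ (fun i _ => ENNReal.toReal_nonneg) hsummable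
    obtain ⟨N, hN⟩ :=
      (Filter.tendsto_atTop.1 (hκ ρ hρpos hρle) (∑' n, (P (E n)).toReal + 1)).exists
    linarith [hb N]
  have hlim : P (limsup E atTop) = 1 :=
    ProbabilityTheory.measure_limsup_eq_one hEmeas hind htop
  have hcompl : P (limsup E atTop)ᶜ = 0 := by
    rw [measure_compl (MeasurableSet.measurableSet_limsup hEmeas) (measure_ne_top P _), hlim]
    simp
  have hae : ∀ᵐ ω ∂P, ω ∈ limsup E atTop := by
    rw [ae_iff]
    convert hcompl using 1
    rfl
  filter_upwards [hae] with ω hω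
  obtain ⟨n, hn⟩ := (Filter.mem_limsup_iff_frequently_mem.1 hω).exists
  obtain ⟨i, hi⟩ := hz ω n
  refine ⟨n + 1, Nat.succ_le_succ (Nat.zero_le n), ?_⟩
  rw [hi]
  exact Set.mem_iInter.1 hn i

/-- **Convergence in measure of the distance-to-sample-set heuristic.**
If the samples are generated by the selective sampling process `S(κ, Φ)` with
`Φ(x, S) = d(x, S)` and `∑ ρ^{κ(n)} = ∞` for all `0 < ρ ≤ 1`, `X` is separable,
and the `f`-boundary has measure zero, then with probability one the nearest
neighbor predictions converge to `f` μ-almost everywhere (i.e. in measure). -/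
theorem dist_heuristic_convergence_in_measure
    {X : Type*} [MetricSpace X] [TopologicalSpace.SeparableSpace X]
    [MeasurableSpace X] [BorelSpace X]
    {Y : Type*} [Countable Y]
    (μ : Measure X) [IsProbabilityMeasure μ] (f : X → Y)
    {Ω : Type*} [MeasurableSpace Ω] (P : Measure Ω) [IsProbabilityMeasure P]
    -- the candidate-count function κ : ℕ⁺ → ℕ⁺ (κ (n+1) candidates at step n+1)
    (κ : ℕ → ℕ) (hκpos : ∀ n, 1 ≤ κ n)
    (hκ : ∀ ρ : ℝ, 0 < ρ → ρ ≤ 1 →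
      Tendsto (fun N => ∑ n ∈ Finset.Icc 1 N, ρ ^ κ n) atTop atTop)
    -- at step n+1, κ(n+1) candidates are drawn, iid with law μ
    (cand : (n : ℕ) → Fin (κ (n + 1)) → Ω → X)
    (hmeas : ∀ n i, Measurable (cand n i))
    (hlaw : ∀ n i, P.map (cand n i) = μ)
    (hindep : iIndepFun
      (fun p : Σ n : ℕ, Fin (κ (n + 1)) => cand p.1 p.2) P)
    -- the sample z_{n+1} is a candidate maximizing Φ(·, Z_n) = d(·, Z_n)
    (z : ℕ → Ω → X)
    (hsel : ∀ ω n, ∃ i : Fin (κ (n + 1)), z (n + 1) ω = cand n i ω ∧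
      ∀ j : Fin (κ (n + 1)),
        infDist (cand n j ω) (sampleSet z n ω) ≤
          infDist (cand n i ω) (sampleSet z n ω))
    -- ζ_n is a nearest neighbor prediction over Z_n (ties broken arbitrarily)
    (ζ : ℕ → Ω → X → Y)
    (hζ : ∀ ω x n, 1 ≤ n → ∃ i, 1 ≤ i ∧ i ≤ n ∧
      (∀ j, 1 ≤ j → j ≤ n → dist x (z i ω) ≤ dist x (z j ω)) ∧
      ζ n ω x = f (z i ω))
    (hbdry : μ {b | IsFBoundaryPoint f μ b} = 0) :
    ∀ᵐ ω ∂P, ∀ᵐ x ∂μ, ∀ᶠ n in atTop, ζ n ω x = f x := by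
  haveI := UniformSpace.secondCountable_of_separable X
  have hXne : Nonempty X := by
    by_contra h
    rw [not_nonempty_iff] at h
    have h1 : μ Set.univ = 1 := measure_univ
    rw [Set.univ_eq_empty_iff.2 h, measure_empty] at h1
    exact zero_ne_one h1
  set u : ℕ → X := TopologicalSpace.denseSeq X with hu_def
  have hu : DenseRange u := TopologicalSpace.denseRange_denseSeq X
  -- the bad label set and its measurable hull
  set U : Y → Set X := fun y => {v | ∃ δ > 0, μ (ball v δ ∩ {w | f w ≠ y}) = 0} with hU
  set Nset : Set X := ⋃ y : Y, {v | v ∈ U y ∧ f v ≠ y} with hNset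
  have hN : μ Nset = 0 := by
    refine measure_iUnion_null fun y => ?_
    refine aux_null_of_locally_null μ {w | f w ≠ y} _ (fun v hv => hv.2) ?_
    rintro v ⟨⟨δ, hδ, h0⟩, _⟩
    exact ⟨δ, hδ, h0⟩
  obtain ⟨M, hNM, hMmeas, hM0⟩ := exists_measurable_superset_of_null hN
  -- a.s. every positive-measure rational ball is eventually hit by a sample
  have hz' : ∀ ω n, ∃ i : Fin (κ (n + 1)), z (n + 1) ω = cand n i ω :=
    fun ω n => (hsel ω n).imp fun i h => h.1
  have hdense : ∀ᵐ ω ∂P, ∀ (i : ℕ) (q : ℚ), 0 < μ (ball (u i) q) →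
      ∃ k, 1 ≤ k ∧ z k ω ∈ ball (u i) q := by
    rw [ae_all_iff]
    intro i
    rw [ae_all_iff]
    intro q
    by_cases h : 0 < μ (ball (u i) q)
    · filter_upwards [aux_hit μ P κ hκ cand hmeas hlaw hindep z hz'
        (ball (u i) q) measurableSet_ball h] with ω hω _
      exact hω
    · filter_upwards with ω h'
      exact absurd h' h
  -- a.s. all candidates avoid M
  have havoid : ∀ᵐ ω ∂P, ∀ n (i : Fin (κ (n + 1))), cand n i ω ∉ M := by
    rw [ae_all_iff]
    intro n
    rw [ae_all_iff]
    intro i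
    have hzero : P (cand n i ⁻¹' M) = 0 := by
      rw [← Measure.map_apply (hmeas n i) hMmeas, hlaw n i]
      exact hM0
    rw [ae_iff]
    have : {ω | ¬ cand n i ω ∉ M} = cand n i ⁻¹' M := by
      ext ω; simp
    rw [this]
    exact hzero
  filter_upwards [hdense, havoid] with ω hωd hωa
  -- all samples avoid M
  have hzM : ∀ k, 1 ≤ k → z k ω ∉ M := by
    intro k hk
    match k, hk with
    | (m + 1), _ =>
      obtain ⟨i, hi, _⟩ := hsel ω m
      rw [hi]
      exact hωa m i
  -- a.e. x is in the support and is not a boundary point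
  have hsupp : μ (measSupport μ)ᶜ = 0 := by
    refine aux_null_of_locally_null μ Set.univ _ (Set.subset_univ _) ?_
    intro x hx
    simp only [measSupport, Set.mem_compl_iff, Set.mem_setOf_eq, not_forall] at hx
    obtain ⟨ε, hε, h0⟩ := hx
    refine ⟨ε, hε, ?_⟩
    rw [Set.inter_univ]
    exact nonpos_iff_eq_zero.1 (not_lt.1 h0)
  have hae1 : ∀ᵐ x ∂μ, x ∈ measSupport μ := by
    rw [ae_iff]
    convert hsupp using 1
    rfl
  have hae2 : ∀ᵐ x ∂μ, ¬ IsFBoundaryPoint f μ x := by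
    rw [ae_iff]
    simpa using hbdry
  filter_upwards [hae1, hae2] with x hx1 hx2
  -- extract a good radius ε
  obtain ⟨ε, hε, hεnull⟩ : ∃ ε > 0, μ (ball x ε ∩ {w | f w ≠ f x}) = 0 := by
    have h := hx2
    unfold IsFBoundaryPoint at h
    push_neg at h
    obtain ⟨ε, hε, h0⟩ := h
    exact ⟨ε, hε, nonpos_iff_eq_zero.1 h0⟩
  -- find a rational ball inside ball x ε hit by samples
  obtain ⟨i0, hi0⟩ : ∃ i0, dist x (u i0) < ε / 8 :=
    Metric.denseRange_iff.1 hu x (ε / 8) (by positivity)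
  obtain ⟨q, hq1, hq2⟩ := exists_rat_btwn (show (ε / 4 : ℝ) < ε / 2 by linarith)
  have hq0 : (0 : ℝ) < q := lt_trans (by positivity) hq1
  have hsub1 : ball x (ε / 8) ⊆ ball (u i0) q := by
    intro v hv
    rw [mem_ball] at hv ⊢
    have h3 := dist_triangle v x (u i0)
    linarith
  have hpos : 0 < μ (ball (u i0) q) :=
    lt_of_lt_of_le (hx1 (ε / 8) (by positivity)) (measure_mono hsub1)
  obtain ⟨k0, hk0, hk0mem⟩ := hωd i0 q hpos
  have hk0dist : dist x (z k0 ω) < ε := by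
    rw [mem_ball] at hk0mem
    have h3 := dist_triangle x (u i0) (z k0 ω)
    rw [dist_comm (u i0) (z k0 ω)] at h3
    linarith
  rw [Filter.eventually_atTop]
  refine ⟨k0, fun n hn => ?_⟩
  obtain ⟨i, hi1, hin, hmin, hζeq⟩ := hζ ω x n (le_trans hk0 hn)
  have hdi : dist x (z i ω) < ε := lt_of_le_of_lt (hmin k0 hk0 hn) hk0dist
  rw [hζeq]
  by_contra hne
  have hzU : z i ω ∈ U (f x) := by
    refine ⟨ε - dist x (z i ω), by linarith, ?_⟩
    refine measure_mono_null (Set.inter_subset_inter_left _ ?_) hεnull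
    intro v hv
    rw [mem_ball] at hv ⊢
    have h3 := dist_triangle v (z i ω) x
    rw [dist_comm (z i ω) x] at h3
    linarith
  exact hzM i hi1 (hNM (Set.mem_iUnion.2 ⟨f x, hzU, hne⟩))
end

section
/- Let S ⊆ X and let x ∈ X \ S. If v is a Voronoi neighbor of x with respect to S, then there exists ε > 0 such that for all x' in the open ball B_ε(x), v is a Voronoi neighbor of x' with respect to S. Furthermore, if v is a nearest neighbor of x in S (i.e., d(x,v) ≤ d(x,s) for all s ∈ S), then this conclusion holds for every ε with 0 < ε ≤ d(x,v). -/
open Metric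

/-- `v` is a Voronoi neighbor of `x` with respect to `S` iff `v ∈ S` and there
is a "certifying" point `c` with `d(x,c) < d(v,c) ≤ d(s,c)` for all `s ∈ S`. -/
def IsVoronoiNbr {X : Type*} [MetricSpace X] (S : Set X) (x v : X) : Prop :=
  v ∈ S ∧ ∃ c : X, dist x c < dist v c ∧ ∀ s ∈ S, dist v c ≤ dist s c

/-- **Stability of Voronoi neighbors.** If `v` is a Voronoi neighbor of
`x ∉ S` with respect to `S`, then `v` remains a Voronoi neighbor of every
point of some open ball about `x`; moreover if `v` is a nearest neighbor of
`x` in `S`, this holds for every radius `0 < ε ≤ d(x,v)`. -/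
theorem voronoiNbr_stable
    {X : Type*} [MetricSpace X] (S : Set X) (x : X) (hx : x ∉ S) (v : X)
    (hv : IsVoronoiNbr S x v) :
    (∃ ε > 0, ∀ x' ∈ ball x ε, IsVoronoiNbr S x' v) ∧
    ((∀ s ∈ S, dist x v ≤ dist x s) →
      ∀ ε : ℝ, 0 < ε → ε ≤ dist x v → ∀ x' ∈ ball x ε, IsVoronoiNbr S x' v) := by
  obtain ⟨hvS, c, hc1, hc2⟩ := hv
  constructor
  · refine ⟨dist v c - dist x c, by linarith, fun x' hx' => ⟨hvS, c, ?_, hc2⟩⟩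
    have := dist_triangle x' x c
    rw [mem_ball] at hx'
    linarith
  · intro hnn ε hε hεv x' hx'
    refine ⟨hvS, x, ?_, fun s hs => ?_⟩
    · rw [mem_ball] at hx'
      rw [dist_comm v x]
      linarith
    · rw [dist_comm v x, dist_comm s x]
      exact hnn s hs
end

section
/- Fix an integer K ≥ 2. Let {z_n} be generated by the selective sampling process S(κ,Φ) where κ satisfies Σ_{n=1}^∞ ρ^{κ(n)} = ∞ for every 0 < ρ ≤ 1, and Φ is the non-modal count heuristic Φ(x,S) = |V_S(x)| − modefreq_f(V_S(x)) with V_S(x) the K-nearest neighbors of x with respect to S. If x ∈ X is contained in an f-contiguous component of positive μ-measure, then the nearest neighbor predictions satisfy ζ_n(x) → f(x) with probability one. -/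
open MeasureTheory ProbabilityTheory Filter Metric

/-- `modefreq_f(A)`: the frequency of the mode of `A` under `f`, i.e. the
maximum over `y` of the number of elements of `A` with `f`-value `y`. -/
noncomputable def modeFreq {X Y : Type*} (f : X → Y) (A : Set X) : ℕ :=
  ⨆ y : Y, (A ∩ f ⁻¹' {y}).ncard

/-- `V` is a set of `K` nearest neighbors of `x` in `S`: a `K`-element subset of
`S` minimizing distance to `x`, and among all such, minimizing `modefreq_f`. -/
def IsKNNSet {X Y : Type*} [MetricSpace X] (f : X → Y) (K : ℕ)
    (S : Set X) (x : X) (V : Finset X) : Prop :=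
  V.card = K ∧ ↑V ⊆ S ∧
    (∀ v ∈ V, ∀ s ∈ S, s ∉ V → dist x v ≤ dist x s) ∧
    ∀ W : Finset X, W.card = K → ↑W ⊆ S →
      (∀ v ∈ W, ∀ s ∈ S, s ∉ W → dist x v ≤ dist x s) →
      modeFreq f (↑V : Set X) ≤ modeFreq f (↑W : Set X)

open scoped Classical in
/-- The non-modal count heuristic with `K`-nearest neighbors:
`Φ(x,S) = |V_S(x)| − modefreq_f(V_S(x))`, where `V_S(x)` is a `K`-set of
nearest neighbors of `x` minimizing `modefreq_f` (so the value is
`K - min modefreq`), and `V_S(x) = ∅` when `x ∈ S`. -/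
noncomputable def nmcKNN {X Y : Type*} [MetricSpace X] (f : X → Y) (K : ℕ)
    (x : X) (S : Set X) : ℤ :=
  if x ∈ S then 0
  else (K : ℤ) - sInf {m : ℕ | ∃ V : Finset X, IsKNNSet f K S x V ∧
    modeFreq f (↑V : Set X) = m}

/-- `R` is `f`-contiguous: `R` is connected, `f` is constant on `R`, `R` lies in
the support of `μ`, and `R` contains no `f`-boundary point. -/
def IsFContiguous {X Y : Type*} [MetricSpace X] [MeasurableSpace X]
    (f : X → Y) (μ : Measure X) (R : Set X) : Prop :=
  IsPreconnected R ∧ (∀ a ∈ R, ∀ b ∈ R, f a = f b) ∧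
    R ⊆ measSupport μ ∧ ∀ b ∈ R, ¬ IsFBoundaryPoint f μ b

/-- An `f`-contiguous component: a maximal `f`-contiguous set. -/
def IsFContiguousComponent {X Y : Type*} [MetricSpace X] [MeasurableSpace X]
    (f : X → Y) (μ : Measure X) (C : Set X) : Prop :=
  IsFContiguous f μ C ∧ ∀ R : Set X, IsFContiguous f μ R → C ⊆ R → R = C

open scoped ENNReal NNReal

/-- **Convergence of the non-modal count heuristic (`K`-nearest neighbors).**
Fix `K ≥ 2`. If the samples are generated by the selective sampling process
`S(κ, Φ)` with `Φ(x,S) = |V_S(x)| − modefreq_f(V_S(x))` (`V_S(x)` the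
`K`-nearest neighbors) and `∑ ρ^{κ(n)} = ∞` for all `0 < ρ ≤ 1`, then at every
point `x` contained in an `f`-contiguous component of positive measure, the
nearest neighbor predictions `ζ_n(x)` converge to `f(x)` with probability
one. -/
theorem nmc_knn_pointwise_convergence
    {X : Type*} [MetricSpace X] [MeasurableSpace X] [BorelSpace X]
    {Y : Type*} [Countable Y]
    (μ : Measure X) [IsProbabilityMeasure μ] (f : X → Y)
    {Ω : Type*} [MeasurableSpace Ω] (P : Measure Ω) [IsProbabilityMeasure P]
    (K : ℕ) (hK : 2 ≤ K)
    -- the candidate-count function κ : ℕ⁺ → ℕ⁺ (κ (n+1) candidates at step n+1)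
    (κ : ℕ → ℕ) (hκpos : ∀ n, 1 ≤ κ n)
    (hκ : ∀ ρ : ℝ, 0 < ρ → ρ ≤ 1 →
      Tendsto (fun N => ∑ n ∈ Finset.Icc 1 N, ρ ^ κ n) atTop atTop)
    -- at step n+1, κ(n+1) candidates are drawn, iid with law μ
    (cand : (n : ℕ) → Fin (κ (n + 1)) → Ω → X)
    (hmeas : ∀ n i, Measurable (cand n i))
    (hlaw : ∀ n i, P.map (cand n i) = μ)
    (hindep : iIndepFun
      (fun p : Σ n : ℕ, Fin (κ (n + 1)) => cand p.1 p.2) P)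
    -- the sample z_{n+1} is a candidate maximizing the heuristic Φ(·, Z_n)
    (z : ℕ → Ω → X)
    (hsel : ∀ ω n, ∃ i : Fin (κ (n + 1)), z (n + 1) ω = cand n i ω ∧
      ∀ j : Fin (κ (n + 1)),
        nmcKNN f K (cand n j ω) (sampleSet z n ω) ≤
          nmcKNN f K (cand n i ω) (sampleSet z n ω))
    -- ζ_n is a nearest neighbor prediction over Z_n (ties broken arbitrarily)
    (ζ : ℕ → Ω → X → Y)
    (hζ : ∀ ω x n, 1 ≤ n → ∃ i, 1 ≤ i ∧ i ≤ n ∧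
      (∀ j, 1 ≤ j → j ≤ n → dist x (z i ω) ≤ dist x (z j ω)) ∧
      ζ n ω x = f (z i ω))
    (x : X) (C : Set X) (hC : IsFContiguousComponent f μ C) (hxC : x ∈ C)
    (hCpos : 0 < μ C) :
    ∀ᵐ ω ∂P, ∀ᶠ n in atTop, ζ n ω x = f x := by
  classical
  -- `x` is in the support of `μ` and is not an `f`-boundary point.
  obtain ⟨hconn, hconst, hsupp, hnobd⟩ := hC.1
  have hxsupp : x ∈ measSupport μ := hsupp hxC
  have hxnb : ¬ IsFBoundaryPoint f μ x := hnobd x hxC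
  -- extract a radius ε with null "wrong label" set
  rw [IsFBoundaryPoint] at hxnb
  push_neg at hxnb
  obtain ⟨ε, hε, hNle⟩ := hxnb
  have hN0 : μ (ball x ε ∩ {x' | f x' ≠ f x}) = 0 := le_antisymm hNle zero_le
  set Nset : Set X := ball x ε ∩ {x' | f x' ≠ f x} with hNset
  set M : Set X := toMeasurable μ Nset with hM
  have hMmeas : MeasurableSet M := measurableSet_toMeasurable μ Nset
  have hM0 : μ M = 0 := by rw [hM, measure_toMeasurable]; exact hN0
  have hNM : Nset ⊆ M := subset_toMeasurable μ Nset
  -- the small ball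
  set r : ℝ := ε / 2 with hr
  have hrpos : 0 < r := by positivity
  set B : Set X := ball x r with hB
  have hBmeas : MeasurableSet B := measurableSet_ball
  set q : ℝ≥0∞ := μ B with hq
  have hqpos : 0 < q := hxsupp r hrpos
  have hqle : q ≤ 1 := prob_le_one
  have hqne : q ≠ ⊤ := (lt_of_le_of_lt hqle (by norm_num)).ne
  -- candidate preimage measure
  have hcandB : ∀ n (i : Fin (κ (n + 1))), P (cand n i ⁻¹' B) = q := by
    intro n i
    rw [hq, ← hlaw n i, Measure.map_apply (hmeas n i) hBmeas]
  -- the events: all candidates of step n+1 land in B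
  set E : ℕ → Set Ω := fun n => ⋂ i : Fin (κ (n + 1)), cand n i ⁻¹' B with hE
  have hEmeas : ∀ n, MeasurableSet (E n) :=
    fun n => MeasurableSet.iInter fun i => (hmeas n i) hBmeas
  -- P(⋂ n ∈ s, E n) = ∏ n ∈ s, q ^ κ (n+1)
  have hprod : ∀ s : Finset ℕ, P (⋂ n ∈ s, E n) = ∏ n ∈ s, q ^ κ (n + 1) := by
    intro s
    have hset : (⋂ n ∈ s, E n) =
        ⋂ p ∈ s.sigma (fun n => (Finset.univ : Finset (Fin (κ (n + 1))))),
          cand p.1 p.2 ⁻¹' B := by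
      ext ω
      simp only [hE, Set.mem_iInter, Finset.mem_sigma, Finset.mem_univ, and_true,
        Set.mem_preimage, Sigma.forall]
      exact ⟨fun h a b ha => h a ha b, fun h a ha b => h a b ha⟩
    rw [hset, hindep.measure_inter_preimage_eq_mul
      (s.sigma fun n => (Finset.univ : Finset (Fin (κ (n + 1)))))
      (sets := fun _ => B) (fun _ _ => hBmeas)]
    rw [Finset.prod_sigma]
    exact Finset.prod_congr rfl fun n _ => by
      simp [hcandB n, Finset.prod_const, Finset.card_univ]
  have hPE : ∀ n, P (E n) = q ^ κ (n + 1) := by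
    intro n
    have := hprod {n}
    simpa using this
  -- independence of the events E n
  have hiIndep : iIndepSet E P := by
    rw [iIndepSet_iff_meas_biInter hEmeas]
    intro s
    rw [hprod s]
    exact (Finset.prod_congr rfl fun n _ => (hPE n).symm)
  -- divergence of the sum
  set ρ : ℝ := q.toReal with hρ
  have hρpos : 0 < ρ := ENNReal.toReal_pos hqpos.ne' hqne
  have hρle : ρ ≤ 1 := by
    rw [hρ]
    exact ENNReal.toReal_le_of_le_ofReal zero_le_one (by simpa using hqle)
  have hdiv := hκ ρ hρpos hρle
  have hnotsum : ¬ Summable (fun n => ρ ^ κ n) := by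
    intro hsum
    have hbdd : ∀ N, ∑ n ∈ Finset.Icc 1 N, ρ ^ κ n ≤ ∑' n, ρ ^ κ n := by
      intro N
      exact Summable.sum_le_tsum _ (fun i _ => by positivity) hsum
    obtain ⟨N, hN⟩ := (hdiv.eventually_gt_atTop (∑' n, ρ ^ κ n)).exists
    exact absurd (hbdd N) (not_le.mpr hN)
  have hnotsum' : ¬ Summable (fun n => ρ ^ κ (n + 1)) := by
    intro hsum
    exact hnotsum ((summable_nat_add_iff 1).mp hsum)
  have htsum : (∑' n, P (E n)) = ∞ := by
    have hcoe : ∀ n, P (E n) = ((q.toNNReal ^ κ (n + 1) : ℝ≥0) : ℝ≥0∞) := by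
      intro n
      rw [hPE n, ENNReal.coe_pow, ENNReal.coe_toNNReal hqne]
    rw [tsum_congr hcoe]
    by_contra h
    apply hnotsum'
    have h2 := NNReal.summable_coe.mpr (ENNReal.tsum_coe_ne_top_iff_summable.mp h)
    have heq : (fun n => ((q.toNNReal ^ κ (n + 1) : ℝ≥0) : ℝ)) =
        fun n => ρ ^ κ (n + 1) := by
      funext n
      simp [hρ, ENNReal.toReal]
    rwa [heq] at h2
  -- second Borel-Cantelli
  have hBC : P (limsup E atTop) = 1 :=
    ProbabilityTheory.measure_limsup_eq_one hEmeas hiIndep htsum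
  have haeLim : ∀ᵐ ω ∂P, ω ∈ limsup E atTop := by
    have hlm : MeasurableSet (limsup E atTop) := by
      rw [limsup_eq_iInf_iSup_of_nat]
      simp only [Set.iInf_eq_iInter, Set.iSup_eq_iUnion]
      exact MeasurableSet.iInter fun n => MeasurableSet.iUnion fun m =>
        MeasurableSet.iUnion fun _ => hEmeas m
    have hcompl : P ((limsup E atTop)ᶜ) = 0 := by
      rw [measure_compl hlm (measure_ne_top P _), hBC]
      simp
    exact (MeasureTheory.measure_eq_zero_iff_ae_notMem.mp hcompl).mono fun ω h =>
      not_not.mp (fun h' => h h')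
  -- a.s. no candidate ever lands in M
  have haeM : ∀ᵐ ω ∂P, ∀ n (i : Fin (κ (n + 1))), cand n i ω ∉ M := by
    rw [ae_all_iff]
    intro n
    rw [ae_all_iff]
    intro i
    have : P (cand n i ⁻¹' M) = 0 := by
      rw [← hlaw n i, Measure.map_apply (hmeas n i) hMmeas] at hM0
      exact hM0
    exact (measure_eq_zero_iff_ae_notMem.mp this).mono fun ω h => h
  -- combine
  filter_upwards [haeLim, haeM] with ω hlim hnoM
  -- every sample z (k+1) avoids M
  have hzM : ∀ k, z (k + 1) ω ∉ M := by
    intro k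
    obtain ⟨i, hzi, -⟩ := hsel ω k
    rw [hzi]
    exact hnoM k i
  -- some step has all candidates in B, hence a sample in B
  obtain ⟨n, hn⟩ := (Filter.mem_limsup_iff_frequently_mem.mp hlim).exists
  have hznB : z (n + 1) ω ∈ B := by
    obtain ⟨i, hzi, -⟩ := hsel ω n
    rw [hzi]
    exact Set.mem_iInter.mp hn i
  set m : ℕ := n + 1 with hm
  -- eventually the nearest neighbor has the right label
  rw [Filter.eventually_atTop]
  refine ⟨m, fun N hN => ?_⟩
  have hN1 : 1 ≤ N := le_trans (Nat.succ_le_succ (Nat.zero_le n)) hN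
  obtain ⟨i, hi1, hiN, hmin, hζeq⟩ := hζ ω x N hN1
  have hdist : dist x (z i ω) < ε := by
    have h1 : dist x (z i ω) ≤ dist x (z m ω) :=
      hmin m (Nat.succ_le_succ (Nat.zero_le n)) hN
    have h2 : dist x (z m ω) < r := mem_ball'.mp hznB
    calc dist x (z i ω) ≤ dist x (z m ω) := h1
      _ < r := h2
      _ < ε := by rw [hr]; linarith
  have hziM : z i ω ∉ M := by
    obtain ⟨k, rfl⟩ := Nat.exists_eq_add_of_le' hi1
    exact hzM k
  have hzif : f (z i ω) = f x := by
    by_contra hne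
    exact hziM (hNM ⟨mem_ball'.mpr hdist, hne⟩)
  rw [hζeq, hzif]
end

section
/- Fix an integer K ≥ 2. Let {z_n} be generated by the selective sampling process S(κ,Φ) where κ satisfies Σ_{n=1}^∞ ρ^{κ(n)} = ∞ for every 0 < ρ ≤ 1, and Φ is the non-modal count heuristic Φ(x,S) = |V_S(x)| − modefreq_f(V_S(x)) with V_S(x) the K-nearest neighbors of x with respect to S. If X is separable, the set of f-boundary points has μ-measure zero, and the union of all f-contiguous components of μ-measure zero itself has μ-measure zero, then with probability one, ζ_n(x) → f(x) for μ-almost every x ∈ X (i.e., ζ_n → f in measure). -/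
open MeasureTheory ProbabilityTheory Filter Metric
open scoped ENNReal

/-- Second Borel-Cantelli applied to "all candidates in B at step n". -/
theorem aux_all_cands_io
    {X : Type*} [MeasurableSpace X] {Ω : Type*} [MeasurableSpace Ω]
    (P : Measure Ω) [IsProbabilityMeasure P]
    (μ : Measure X) [IsProbabilityMeasure μ]
    (κ : ℕ → ℕ)
    (hκ : ∀ ρ : ℝ, 0 < ρ → ρ ≤ 1 →
      Tendsto (fun N => ∑ n ∈ Finset.Icc 1 N, ρ ^ κ n) atTop atTop)
    (cand : (n : ℕ) → Fin (κ (n + 1)) → Ω → X)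
    (hmeas : ∀ n i, Measurable (cand n i))
    (hlaw : ∀ n i, P.map (cand n i) = μ)
    (hindep : iIndepFun
      (m := fun _ : Σ n : ℕ, Fin (κ (n + 1)) => (inferInstance : MeasurableSpace X))
      (fun p => cand p.1 p.2) P)
    (B : Set X) (hB : MeasurableSet B) (hBpos : 0 < μ B) :
    ∀ᵐ ω ∂P, ∃ᶠ n in atTop, ∀ i, cand n i ω ∈ B := by
  set E : ℕ → Set Ω := fun n => ⋂ i, cand n i ⁻¹' B with hE
  have hEm : ∀ n, MeasurableSet (E n) :=
    fun n => MeasurableSet.iInter fun i => (hmeas n i) hB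
  have hprod := (iIndepFun_iff_measure_inter_preimage_eq_mul.mp hindep)
  have hone : ∀ n i, P (cand n i ⁻¹' B) = μ B := by
    intro n i; rw [← hlaw n i, Measure.map_apply (hmeas n i) hB]
  have hblock : ∀ t : Finset ℕ, P (⋂ n ∈ t, E n) = ∏ n ∈ t, (μ B) ^ κ (n + 1) := by
    intro t
    have key := hprod (t.sigma fun n => (Finset.univ : Finset (Fin (κ (n + 1)))))
      (sets := fun _ => B) (fun p _ => hB)
    have hset : (⋂ p ∈ (t.sigma fun n => (Finset.univ : Finset (Fin (κ (n + 1))))),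
        cand p.1 p.2 ⁻¹' B) = ⋂ n ∈ t, E n := by
      ext ω
      simp only [Set.mem_iInter, Finset.mem_sigma, Finset.mem_univ, and_true, Set.mem_preimage,
        Sigma.forall, hE]
      exact ⟨fun h n hn i => h n i hn, fun h n i hn => h n hn i⟩
    rw [hset] at key
    rw [key, Finset.prod_sigma]
    refine Finset.prod_congr rfl fun n _ => ?_
    simp [hone, Finset.prod_const]
  have hEn : ∀ n, P (E n) = (μ B) ^ κ (n + 1) := by
    intro n
    have := hblock {n}
    simpa using this
  have hiio : iIndepSet E P := by
    rw [iIndepSet_iff_meas_biInter hEm]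
    intro t
    rw [hblock t]
    exact Finset.prod_congr rfl fun n _ => (hEn n).symm
  have hsum : (∑' n, P (E n)) = ∞ := by
    by_contra h
    set ρ : ℝ := (μ B).toReal with hρ
    have hμB1 : μ B ≤ 1 := prob_le_one
    have hμBne : μ B ≠ ⊤ := (lt_of_le_of_lt hμB1 (by norm_num)).ne
    have hρpos : 0 < ρ := ENNReal.toReal_pos hBpos.ne' hμBne
    have hρle : ρ ≤ 1 := by
      rw [hρ, ← ENNReal.toReal_one]
      exact ENNReal.toReal_mono (by norm_num) hμB1
    have hbdd : ∀ N : ℕ, ∑ n ∈ Finset.Icc 1 N, ρ ^ κ n ≤ (∑' n, P (E n)).toReal := by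
      intro N
      have h1 : ∑ n ∈ Finset.Icc 1 N, ρ ^ κ n
          = (∑ n ∈ Finset.range N, P (E n)).toReal := by
        rw [ENNReal.toReal_sum (fun n _ => by rw [hEn]; exact ENNReal.pow_ne_top hμBne)]
        rw [show Finset.Icc 1 N = Finset.Ico 1 (N + 1) by rfl, Finset.sum_Ico_eq_sum_range]
        simp only [Nat.add_sub_cancel]
        refine Finset.sum_congr rfl fun n _ => ?_
        rw [hEn, ENNReal.toReal_pow, add_comm 1 n]
      rw [h1]
      refine ENNReal.toReal_mono h ?_
      exact ENNReal.sum_le_tsum _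
    have := hκ ρ hρpos hρle
    obtain ⟨N, hN⟩ := (tendsto_atTop.mp this ((∑' n, P (E n)).toReal + 1)).exists
    linarith [hbdd N]
  have := measure_limsup_eq_one hEm hiio hsum
  have hls : MeasurableSet (limsup E atTop) := MeasurableSet.measurableSet_limsup hEm
  have hae : ∀ᵐ ω ∂P, ω ∈ limsup E atTop := by
    rw [ae_iff]
    have : {ω | ¬ ω ∈ limsup E atTop} = (limsup E atTop)ᶜ := rfl
    rw [this, prob_compl_eq_zero_iff hls]
    exact measure_limsup_eq_one hEm hiio hsum
  filter_upwards [hae] with ω hω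
  have := (mem_limsup_iff_frequently_mem).mp hω
  refine this.mono fun n hn i => ?_
  exact Set.mem_iInter.mp hn i


theorem aux_supp_ae {X : Type*} [MetricSpace X] [TopologicalSpace.SeparableSpace X]
    [MeasurableSpace X] (μ : Measure X) :
    ∀ᵐ x ∂μ, x ∈ measSupport μ := by
  obtain ⟨D, Dc, Dd⟩ := TopologicalSpace.exists_countable_dense X
  set T : Set (X × ℚ) := {p | p.1 ∈ D ∧ μ (ball p.1 (p.2 : ℝ)) = 0} with hT
  have hTc : T.Countable :=
    (Dc.prod Set.countable_univ).mono (by intro p hp; exact ⟨hp.1, trivial⟩)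
  have hcover : {x | x ∉ measSupport μ} ⊆ ⋃ p ∈ T, ball p.1 (p.2 : ℝ) := by
    intro x hx
    simp only [measSupport, Set.mem_setOf_eq, not_forall] at hx
    obtain ⟨ε, hε, hμ⟩ := hx
    have hμ0 : μ (ball x ε) = 0 := by
      simpa [pos_iff_ne_zero, not_not] using hμ
    obtain ⟨q, hq⟩ := (Metric.dense_iff.mp Dd) x (ε/3) (by linarith)
    obtain ⟨r, hr1, hr2⟩ := exists_rat_btwn (show ε/3 < 2*ε/3 by linarith)
    have hqx : dist q x < ε/3 := mem_ball.mp hq.1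
    have hsub : ball q (r : ℝ) ⊆ ball x ε := by
      intro s hs
      have := mem_ball.mp hs
      rw [mem_ball]
      calc dist s x ≤ dist s q + dist q x := dist_triangle _ _ _
        _ < (r : ℝ) + ε/3 := by linarith
        _ ≤ 2*ε/3 + ε/3 := by linarith
        _ = ε := by ring
    have hmem : (q, r) ∈ T := ⟨hq.2, le_antisymm (hμ0 ▸ measure_mono hsub) zero_le⟩
    refine Set.mem_biUnion hmem ?_
    rw [mem_ball, dist_comm]
    linarith
  rw [ae_iff]
  refine measure_mono_null hcover ?_
  exact (measure_biUnion_null_iff hTc).mpr fun p hp => hp.2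

/-- **Convergence in measure of the non-modal count heuristic (`K`-nearest
neighbors).** Fix `K ≥ 2`. If `X` is separable, the `f`-boundary has measure
zero, and the union of all `f`-contiguous components of measure zero itself
has measure zero, then with probability one the nearest neighbor predictions
converge to `f` μ-almost everywhere (i.e. in measure). -/
theorem nmc_knn_convergence_in_measure
    {X : Type*} [MetricSpace X] [TopologicalSpace.SeparableSpace X]
    [MeasurableSpace X] [BorelSpace X]
    {Y : Type*} [Countable Y]
    (μ : Measure X) [IsProbabilityMeasure μ] (f : X → Y)
    {Ω : Type*} [MeasurableSpace Ω] (P : Measure Ω) [IsProbabilityMeasure P]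
    (K : ℕ) (hK : 2 ≤ K)
    -- the candidate-count function κ : ℕ⁺ → ℕ⁺ (κ (n+1) candidates at step n+1)
    (κ : ℕ → ℕ) (hκpos : ∀ n, 1 ≤ κ n)
    (hκ : ∀ ρ : ℝ, 0 < ρ → ρ ≤ 1 →
      Tendsto (fun N => ∑ n ∈ Finset.Icc 1 N, ρ ^ κ n) atTop atTop)
    -- at step n+1, κ(n+1) candidates are drawn, iid with law μ
    (cand : (n : ℕ) → Fin (κ (n + 1)) → Ω → X)
    (hmeas : ∀ n i, Measurable (cand n i))
    (hlaw : ∀ n i, P.map (cand n i) = μ)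
    (hindep : iIndepFun
      (m := fun _ : Σ n : ℕ, Fin (κ (n + 1)) => (inferInstance : MeasurableSpace X))
      (fun p => cand p.1 p.2) P)
    -- the sample z_{n+1} is a candidate maximizing the heuristic Φ(·, Z_n)
    (z : ℕ → Ω → X)
    (hsel : ∀ ω n, ∃ i : Fin (κ (n + 1)), z (n + 1) ω = cand n i ω ∧
      ∀ j : Fin (κ (n + 1)),
        nmcKNN f K (cand n j ω) (sampleSet z n ω) ≤
          nmcKNN f K (cand n i ω) (sampleSet z n ω))
    -- ζ_n is a nearest neighbor prediction over Z_n (ties broken arbitrarily)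
    (ζ : ℕ → Ω → X → Y)
    (hζ : ∀ ω x n, 1 ≤ n → ∃ i, 1 ≤ i ∧ i ≤ n ∧
      (∀ j, 1 ≤ j → j ≤ n → dist x (z i ω) ≤ dist x (z j ω)) ∧
      ζ n ω x = f (z i ω))
    (hbdry : μ {b | IsFBoundaryPoint f μ b} = 0)
    (hnull : μ (⋃ C ∈ {C : Set X | IsFContiguousComponent f μ C ∧ μ C = 0}, C) = 0) :
    ∀ᵐ ω ∂P, ∀ᵐ x ∂μ, ∀ᶠ n in atTop, ζ n ω x = f x := by
  classical
  obtain ⟨D, Dc, Dd⟩ := TopologicalSpace.exists_countable_dense X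
  -- a.s., for every positive-measure rational ball, z visits it infinitely often
  have hG : ∀ᵐ ω ∂P, ∀ q ∈ D, ∀ r : ℚ, 0 < μ (ball q (r : ℝ)) →
      ∃ᶠ n in atTop, z (n + 1) ω ∈ ball q (r : ℝ) := by
    rw [ae_ball_iff Dc]
    intro q hq
    rw [ae_all_iff]
    intro r
    by_cases hpos : 0 < μ (ball q (r : ℝ))
    · have hio := aux_all_cands_io P μ κ hκ cand hmeas hlaw hindep
        (ball q (r : ℝ)) measurableSet_ball hpos
      filter_upwards [hio] with ω hω _
      refine hω.mono fun n hn => ?_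
      obtain ⟨i, hzi, -⟩ := hsel ω n
      rw [hzi]; exact hn i
    · exact ae_of_all _ fun ω h => absurd h hpos
  -- a.s., no candidate ever lands in a null set of the countable family
  have hH : ∀ᵐ ω ∂P, ∀ q ∈ D, ∀ r : ℚ, ∀ y : Y,
      μ (ball q (r : ℝ) ∩ {x | f x ≠ y}) = 0 →
      ∀ n (i : Fin (κ (n + 1))), cand n i ω ∉ ball q (r : ℝ) ∩ {x | f x ≠ y} := by
    rw [ae_ball_iff Dc]
    intro q hq
    rw [ae_all_iff]
    intro r
    rw [ae_all_iff]
    intro y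
    by_cases hnull : μ (ball q (r : ℝ) ∩ {x | f x ≠ y}) = 0
    · have key : ∀ n (i : Fin (κ (n + 1))), ∀ᵐ ω ∂P,
          cand n i ω ∉ ball q (r : ℝ) ∩ {x | f x ≠ y} := by
        intro n i
        have h0 : P (cand n i ⁻¹' (ball q (r : ℝ) ∩ {x | f x ≠ y})) = 0 :=
          Measure.preimage_null_of_map_null (hmeas n i).aemeasurable
            (by rw [hlaw n i]; exact hnull)
        rw [ae_iff]
        simp only [not_not]; exact h0
      filter_upwards [ae_all_iff.mpr fun n => ae_all_iff.mpr (key n)] with ω hω _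
      exact hω
    · exact ae_of_all _ fun ω h => absurd h hnull
  filter_upwards [hG, hH] with ω hGω hHω
  have hbae : ∀ᵐ x ∂μ, ¬ IsFBoundaryPoint f μ x := by
    rw [ae_iff]; simpa only [not_not] using hbdry
  filter_upwards [aux_supp_ae μ, hbae] with x hxsupp hxnb
  -- choose ε with the different-label set null around x
  obtain ⟨ε, hε, hεnull⟩ : ∃ ε > 0, μ (ball x ε ∩ {x' | f x' ≠ f x}) = 0 := by
    by_contra h
    push_neg at h
    exact hxnb fun ε hε => pos_iff_ne_zero.mpr (h ε hε)
  -- a rational ball around x inside ball x ε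
  obtain ⟨q, hq⟩ := (Metric.dense_iff.mp Dd) x (ε/4) (by linarith)
  obtain ⟨r, hr1, hr2⟩ := exists_rat_btwn (show ε/4 < ε/2 by linarith)
  have hqx : dist q x < ε/4 := mem_ball.mp hq.1
  have hsub : ball q (r : ℝ) ⊆ ball x ε := by
    intro s hs
    have := mem_ball.mp hs
    rw [mem_ball]
    calc dist s x ≤ dist s q + dist q x := dist_triangle _ _ _
      _ < (r : ℝ) + ε/4 := by linarith
      _ ≤ ε/2 + ε/4 := by linarith
      _ < ε := by linarith
  have hNnull : μ (ball q (r : ℝ) ∩ {x' | f x' ≠ f x}) = 0 :=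
    measure_mono_null (Set.inter_subset_inter_left _ hsub) hεnull
  have hnocand := hHω q hq.2 r (f x) hNnull
  -- every sample is a candidate, hence never in the null set
  have hnoz : ∀ k, 1 ≤ k → z k ω ∉ ball q (r : ℝ) ∩ {x' | f x' ≠ f x} := by
    intro k hk
    obtain ⟨j, hj, -⟩ := hsel ω (k - 1)
    have hk1 : k - 1 + 1 = k := Nat.succ_pred_eq_of_pos hk
    rw [hk1] at hj
    rw [hj]
    exact hnocand (k - 1) j
  -- the radius ε' so that ball x ε' ⊆ ball q r
  set ε' : ℝ := (r : ℝ) - dist x q with hε'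
  have hε'pos : 0 < ε' := by
    have hdx : dist x q < (r : ℝ) := by rw [dist_comm]; linarith
    rw [hε']
    linarith
  have hball' : ball x ε' ⊆ ball q (r : ℝ) := by
    intro s hs
    have := mem_ball.mp hs
    rw [mem_ball]
    calc dist s q ≤ dist s x + dist x q := dist_triangle _ _ _
      _ < ε' + dist x q := by linarith
      _ = (r : ℝ) := by rw [hε']; ring
  -- a positive-measure rational ball inside ball x ε'
  obtain ⟨q', hq'⟩ := (Metric.dense_iff.mp Dd) x (ε'/4) (by linarith)
  obtain ⟨r', hr1', hr2'⟩ := exists_rat_btwn (show ε'/4 < ε'/2 by linarith)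
  have hq'x : dist q' x < ε'/4 := mem_ball.mp hq'.1
  have hsub' : ball q' (r' : ℝ) ⊆ ball x ε' := by
    intro s hs
    have := mem_ball.mp hs
    rw [mem_ball]
    calc dist s x ≤ dist s q' + dist q' x := dist_triangle _ _ _
      _ < (r' : ℝ) + ε'/4 := by linarith
      _ ≤ ε'/2 + ε'/4 := by linarith
      _ < ε' := by linarith
  have hpos' : 0 < μ (ball q' (r' : ℝ)) := by
    refine lt_of_lt_of_le (hxsupp ((r' : ℝ) - dist x q') ?_) (measure_mono ?_)
    · have hdx : dist x q' < (r' : ℝ) := by rw [dist_comm]; linarith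
      linarith
    · intro s hs
      have := mem_ball.mp hs
      rw [mem_ball]
      calc dist s q' ≤ dist s x + dist x q' := dist_triangle _ _ _
        _ < ((r' : ℝ) - dist x q') + dist x q' := by linarith
        _ = (r' : ℝ) := by ring
  obtain ⟨n₀, hn₀⟩ := (hGω q' hq'.2 r' hpos').exists
  -- conclusion: for n ≥ n₀ + 1, the nearest neighbor has the right label
  rw [eventually_atTop]
  refine ⟨n₀ + 1, fun n hn => ?_⟩
  have hn1 : 1 ≤ n := le_trans (Nat.le_add_left 1 n₀) hn
  obtain ⟨i, hi1, hin, hmin, hζeq⟩ := hζ ω x n hn1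
  have hdn₀ : dist x (z (n₀ + 1) ω) < ε' := by
    have := mem_ball.mp (hsub' hn₀)
    rwa [dist_comm]
  have hdi : dist x (z i ω) < ε' :=
    lt_of_le_of_lt (hmin (n₀ + 1) (Nat.le_add_left 1 n₀) hn) hdn₀
  have hzi_ball : z i ω ∈ ball q (r : ℝ) := by
    refine hball' ?_
    rw [mem_ball, dist_comm]
    exact hdi
  have hfeq : f (z i ω) = f x := by
    by_contra hne
    exact hnoz i hi1 ⟨hzi_ball, hne⟩
  rw [hζeq, hfeq]
end

section
/- Fix an integer K ≥ 2. Let {z_n} be generated by the selective sampling process S(κ,Φ) where κ satisfies Σ_{n=1}^∞ ρ^{κ(n)} = ∞ for every 0 < ρ ≤ 1, and Φ is the non-modal count heuristic Φ(x,S) = |V_S(x)| − modefreq_f(V_S(x)) with V_S(x) the K-nearest neighbors of x with respect to S. Let Q_n = {x ∈ X : Φ(x, Z_n) > 0} and Q = limsup_{n→∞} Q_n. If X is separable and the set of f-boundary points has μ-measure zero, then μ(Q) = 0 with probability one. -/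
open MeasureTheory ProbabilityTheory Filter Metric

open scoped ENNReal

lemma aux_modeFreq_le_card {X Y : Type*} (f : X → Y) (V : Finset X) :
    modeFreq f (↑V : Set X) ≤ V.card := by
  rcases isEmpty_or_nonempty Y with h | h
  · simp [modeFreq, ciSup_of_empty]
  · refine ciSup_le fun y => ?_
    calc ((↑V : Set X) ∩ f ⁻¹' {y}).ncard
        ≤ (↑V : Set X).ncard := Set.ncard_le_ncard Set.inter_subset_left V.finite_toSet
      _ = V.card := Set.ncard_coe_finset V

lemma aux_modeFreq_const {X Y : Type*} (f : X → Y) (V : Finset X) {v₀ : X} (hv₀ : v₀ ∈ V)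
    (hc : ∀ v ∈ V, f v = f v₀) : modeFreq f (↑V : Set X) = V.card := by
  refine le_antisymm (aux_modeFreq_le_card f V) ?_
  have h1 : ((↑V : Set X) ∩ f ⁻¹' {f v₀}) = (↑V : Set X) := by
    ext w
    simp only [Set.mem_inter_iff, Set.mem_preimage, Set.mem_singleton_iff, Finset.mem_coe,
      and_iff_left_iff_imp]
    exact fun hw => hc w hw
  have hbdd : BddAbove (Set.range fun y : Y => ((↑V : Set X) ∩ f ⁻¹' {y}).ncard) := by
    refine ⟨V.card, ?_⟩
    rintro m ⟨y, rfl⟩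
    calc ((↑V : Set X) ∩ f ⁻¹' {y}).ncard
        ≤ (↑V : Set X).ncard := Set.ncard_le_ncard Set.inter_subset_left V.finite_toSet
      _ = V.card := Set.ncard_coe_finset V
  have h2 := le_ciSup hbdd (f v₀)
  rw [h1, Set.ncard_coe_finset] at h2
  exact h2

lemma aux_exists_nearest {X : Type*} [MetricSpace X] {S : Set X} (hS : S.Finite) (x : X) :
    ∀ k, k ≤ hS.toFinset.card → ∃ W : Finset X, W.card = k ∧ ↑W ⊆ S ∧
      (∀ v ∈ W, ∀ s ∈ S, s ∉ W → dist x v ≤ dist x s) := by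
  classical
  intro k
  induction k with
  | zero => exact fun _ => ⟨∅, by simp⟩
  | succ k ih =>
    intro hk
    obtain ⟨W, hWcard, hWS, hWnear⟩ := ih (Nat.le_of_succ_le hk)
    have hWsub : W ⊆ hS.toFinset := fun w hw => hS.mem_toFinset.2 (hWS hw)
    have hne : (hS.toFinset \ W).Nonempty := by
      rw [Finset.sdiff_nonempty]
      intro hsub
      have h1 := Finset.card_le_card hsub
      omega
    obtain ⟨s₀, hs₀mem, hs₀min⟩ := Finset.exists_min_image _ (fun s => dist x s) hne
    have hs₀W : s₀ ∉ W := (Finset.mem_sdiff.1 hs₀mem).2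
    have hs₀S : s₀ ∈ S := hS.mem_toFinset.1 (Finset.mem_sdiff.1 hs₀mem).1
    refine ⟨insert s₀ W, ?_, ?_, ?_⟩
    · rw [Finset.card_insert_of_notMem hs₀W, hWcard]
    · intro w hw
      rcases Finset.mem_insert.1 (Finset.mem_coe.1 hw) with rfl | hw'
      · exact hs₀S
      · exact hWS hw'
    · intro v hv s hs hsW
      have hsW' : s ∉ W := fun h => hsW (Finset.mem_insert_of_mem h)
      rcases Finset.mem_insert.1 hv with rfl | hv'
      · exact hs₀min s (Finset.mem_sdiff.2 ⟨hS.mem_toFinset.2 hs, hsW'⟩)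
      · exact hWnear v hv' s hs hsW'

open scoped Classical in
lemma aux_exists_isKNNSet {X Y : Type*} [MetricSpace X] (f : X → Y) {K : ℕ} {S : Set X}
    (hS : S.Finite) (x : X) (hK : K ≤ hS.toFinset.card) :
    ∃ V : Finset X, IsKNNSet f K S x V := by
  obtain ⟨W₀, hW₀⟩ := aux_exists_nearest hS x K hK
  set 𝒲 := hS.toFinset.powerset.filter
    (fun W => W.card = K ∧ (∀ v ∈ W, ∀ s ∈ S, s ∉ W → dist x v ≤ dist x s)) with h𝒲
  have hmem : ∀ W : Finset X, W ∈ 𝒲 ↔ W.card = K ∧ ↑W ⊆ S ∧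
      (∀ v ∈ W, ∀ s ∈ S, s ∉ W → dist x v ≤ dist x s) := by
    intro W
    simp only [h𝒲, Finset.mem_filter, Finset.mem_powerset]
    constructor
    · rintro ⟨h1, h2, h3⟩
      exact ⟨h2, fun w hw => hS.mem_toFinset.1 (h1 hw), h3⟩
    · rintro ⟨h1, h2, h3⟩
      exact ⟨fun w hw => hS.mem_toFinset.2 (h2 hw), h1, h3⟩
  have hne : 𝒲.Nonempty := ⟨W₀, (hmem W₀).2 hW₀⟩
  obtain ⟨V, hVmem, hVmin⟩ := Finset.exists_min_image 𝒲 (fun W => modeFreq f (↑W : Set X)) hne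
  obtain ⟨h1, h2, h3⟩ := (hmem V).1 hVmem
  exact ⟨V, h1, h2, h3, fun W hWc hWS hWn => hVmin W ((hmem W).2 ⟨hWc, hWS, hWn⟩)⟩

lemma aux_nmcKNN_eq_zero {X Y : Type*} [MetricSpace X] (f : X → Y) {K : ℕ} (hK : 1 ≤ K)
    {S : Set X} (hS : S.Finite) {x : X} {δ : ℝ} (C : Finset X) (hCcard : C.card = K)
    (hCS : ↑C ⊆ S) (hCδ : ∀ c ∈ C, dist x c < δ)
    (hlab : ∀ w ∈ S, dist x w < δ → f w = f x) :
    nmcKNN f K x S = 0 := by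
  classical
  rw [nmcKNN]
  split_ifs with hxS
  · rfl
  have hmode : ∀ W : Finset X, W.card = K → ↑W ⊆ S →
      (∀ v ∈ W, ∀ s ∈ S, s ∉ W → dist x v ≤ dist x s) → modeFreq f (↑W : Set X) = K := by
    intro W hWc hWS hWn
    have hWδ : ∀ v ∈ W, dist x v < δ := by
      intro v hv
      by_cases hCW : ∀ c ∈ C, c ∈ W
      · have hCWeq : C = W :=
          Finset.eq_of_subset_of_card_le (fun c hc => hCW c hc) (by omega)
        exact hCδ v (by rw [hCWeq]; exact hv)
      · push_neg at hCW
        obtain ⟨c, hcC, hcW⟩ := hCW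
        exact lt_of_le_of_lt (hWn v hv c (hCS hcC) hcW) (hCδ c hcC)
    have hWne : W.Nonempty := Finset.card_pos.1 (by omega)
    obtain ⟨v₀, hv₀⟩ := hWne
    have hlabW : ∀ v ∈ W, f v = f v₀ := by
      intro v hv
      rw [hlab v (hWS hv) (hWδ v hv), hlab v₀ (hWS hv₀) (hWδ v₀ hv₀)]
    rw [aux_modeFreq_const f W hv₀ hlabW, hWc]
  have hKcard : K ≤ hS.toFinset.card := by
    rw [← hCcard]
    exact Finset.card_le_card (fun c hc => hS.mem_toFinset.2 (hCS hc))
  obtain ⟨V, hV⟩ := aux_exists_isKNNSet f hS x hKcard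
  have hset : {m : ℕ | ∃ V : Finset X, IsKNNSet f K S x V ∧ modeFreq f (↑V : Set X) = m}
      = {K} := by
    ext m
    simp only [Set.mem_setOf_eq, Set.mem_singleton_iff]
    constructor
    · rintro ⟨V', ⟨h1, h2, h3, _⟩, rfl⟩
      exact hmode V' h1 h2 h3
    · rintro rfl
      exact ⟨V, hV, hmode V hV.1 hV.2.1 hV.2.2.1⟩
  rw [hset, csInf_singleton]
  simp

lemma aux_sampleSet_mono {X Ω : Type*} (z : ℕ → Ω → X) {n m : ℕ} (h : n ≤ m) (ω : Ω) :
    sampleSet z n ω ⊆ sampleSet z m ω := by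
  rintro p ⟨k, h1, h2, h3⟩
  exact ⟨k, h1, h2.trans h, h3⟩

lemma aux_sampleSet_finite {X Ω : Type*} (z : ℕ → Ω → X) (n : ℕ) (ω : Ω) :
    (sampleSet z n ω).Finite := by
  have h : sampleSet z n ω ⊆ (fun k => z k ω) '' (Set.Icc 1 n) := by
    rintro p ⟨k, h1, h2, h3⟩
    exact ⟨k, ⟨h1, h2⟩, h3⟩
  exact ((Set.finite_Icc 1 n).image _).subset h

lemma aux_exists_stage {X Ω : Type*} (z : ℕ → Ω → X) (ω : Ω) :
    ∀ C : Finset X, (∀ c ∈ C, ∃ k, 1 ≤ k ∧ z k ω = c) → ∃ N, ↑C ⊆ sampleSet z N ω := by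
  classical
  intro C
  induction C using Finset.induction_on with
  | empty => exact fun _ => ⟨0, by simp⟩
  | @insert a C' ha ih =>
    intro h
    obtain ⟨N, hN⟩ := ih (fun c hc => h c (Finset.mem_insert_of_mem hc))
    obtain ⟨k, hk1, hk2⟩ := h a (Finset.mem_insert_self a C')
    refine ⟨max N k, ?_⟩
    intro w hw
    rcases Finset.mem_insert.1 (Finset.mem_coe.1 hw) with rfl | hw'
    · exact ⟨k, hk1, le_max_right N k, hk2⟩
    · exact aux_sampleSet_mono z (le_max_left N k) ω (hN hw')

lemma aux_BC {X : Type*} [MeasurableSpace X] {Ω : Type*} [MeasurableSpace Ω]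
    (μ : Measure X) [IsProbabilityMeasure μ] (P : Measure Ω) [IsProbabilityMeasure P]
    (κ : ℕ → ℕ)
    (hκ : ∀ ρ : ℝ, 0 < ρ → ρ ≤ 1 →
      Tendsto (fun N => ∑ n ∈ Finset.Icc 1 N, ρ ^ κ n) atTop atTop)
    (cand : (n : ℕ) → Fin (κ (n + 1)) → Ω → X)
    (hmeas : ∀ n i, Measurable (cand n i))
    (hlaw : ∀ n i, P.map (cand n i) = μ)
    (hindep : iIndepFun
      (fun p : Σ n : ℕ, Fin (κ (n + 1)) => cand p.1 p.2) P)
    (A : Set X) (hA : MeasurableSet A) (hApos : 0 < μ A) :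
    ∀ᵐ ω ∂P, ∃ n : ℕ, ∀ i : Fin (κ (n + 1)), cand n i ω ∈ A := by
  classical
  set s : ℕ → Set Ω := fun n => ⋂ i : Fin (κ (n + 1)), cand n i ⁻¹' A with hs
  have hsmeas : ∀ n, MeasurableSet (s n) :=
    fun n => MeasurableSet.iInter fun i => (hmeas n i) hA
  have hpre : ∀ n i, P (cand n i ⁻¹' A) = μ A := by
    intro n i
    rw [← hlaw n i, Measure.map_apply (hmeas n i) hA]
  have hsn : ∀ n, P (s n) = μ A ^ κ (n + 1) := by
    intro n
    have h1 : s n = ⋂ p ∈ (({n} : Finset ℕ).sigma fun m =>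
        (Finset.univ : Finset (Fin (κ (m + 1))))), cand p.1 p.2 ⁻¹' A := by
      ext ω
      simp only [hs, Set.mem_iInter, Finset.mem_sigma, Finset.mem_singleton, Finset.mem_univ,
        and_true, Set.mem_preimage]
      constructor
      · rintro h ⟨m, i⟩ hm
        subst hm
        exact h i
      · intro h i
        exact h ⟨n, i⟩ rfl
    rw [h1, hindep.meas_biInter (fun p _ => ⟨A, hA, rfl⟩), Finset.prod_sigma,
      Finset.prod_singleton]
    simp only [hpre]
    rw [Finset.prod_const, Finset.card_univ, Fintype.card_fin]
  have hkey : ∀ F : Finset ℕ, P (⋂ n ∈ F, s n) = ∏ n ∈ F, P (s n) := by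
    intro F
    have h1 : (⋂ n ∈ F, s n) = ⋂ p ∈ F.sigma (fun m =>
        (Finset.univ : Finset (Fin (κ (m + 1))))), cand p.1 p.2 ⁻¹' A := by
      ext ω
      simp only [hs, Set.mem_iInter, Finset.mem_sigma, Finset.mem_univ, and_true,
        Set.mem_preimage]
      constructor
      · rintro h ⟨m, i⟩ hm
        exact h m hm i
      · intro h m hm i
        exact h ⟨m, i⟩ hm
    rw [h1, hindep.meas_biInter (fun p _ => ⟨A, hA, rfl⟩), Finset.prod_sigma]
    refine Finset.prod_congr rfl fun n _ => ?_
    rw [hsn n]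
    simp only [hpre]
    rw [Finset.prod_const, Finset.card_univ, Fintype.card_fin]
  have hiis : iIndepSet s P := by
    refine iIndepSets.iIndepSet_of_mem (π := fun n => {s n}) (fun n => rfl) hsmeas ?_
    rw [iIndepSets_iff]
    intro F f' hf'
    have he : ∀ n ∈ F, f' n = s n := fun n hn => hf' n hn
    calc P (⋂ n ∈ F, f' n) = P (⋂ n ∈ F, s n) := by
          congr 1
          exact Set.iInter₂_congr he
      _ = ∏ n ∈ F, P (s n) := hkey F
      _ = ∏ n ∈ F, P (f' n) := Finset.prod_congr rfl fun n hn => by rw [he n hn]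
  have htsum : (∑' n, P (s n)) = ⊤ := by
    by_contra hfin
    set ρ : ℝ := (μ A).toReal with hρ
    have hAne : μ A ≠ ⊤ := measure_ne_top μ A
    have hρpos : 0 < ρ := ENNReal.toReal_pos hApos.ne' hAne
    have hρ1 : ρ ≤ 1 := by
      have h0 : μ A ≤ 1 := prob_le_one
      calc ρ ≤ (1 : ℝ≥0∞).toReal := ENNReal.toReal_mono ENNReal.one_ne_top h0
        _ = 1 := by simp
    set c := ∑' n, P (s n) with hc
    have hcne : c ≠ ⊤ := hfin
    have hbound : ∀ N : ℕ, (∑ n ∈ Finset.Icc 1 N, ρ ^ κ n) ≤ c.toReal := by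
      intro N
      have h1 : (∑ n ∈ Finset.Icc 1 N, ρ ^ κ n)
          = (∑ n ∈ Finset.Icc 1 N, μ A ^ κ n).toReal := by
        rw [ENNReal.toReal_sum (fun n _ => ENNReal.pow_ne_top hAne)]
        exact Finset.sum_congr rfl fun n _ => by rw [ENNReal.toReal_pow]
      rw [h1]
      refine ENNReal.toReal_mono hcne ?_
      have h2 : ∀ N : ℕ, (∑ n ∈ Finset.Icc 1 N, μ A ^ κ n)
          = ∑ i ∈ Finset.range N, μ A ^ κ (i + 1) := by
        intro N
        induction N with
        | zero => simp
        | succ N ih =>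
          rw [Finset.sum_range_succ, ← ih, Finset.sum_Icc_succ_top (by omega)]
      rw [h2, hc]
      simp only [← hsn]
      exact ENNReal.sum_le_tsum _
    obtain ⟨N, hN⟩ := ((hκ ρ hρpos hρ1).eventually_gt_atTop c.toReal).exists
    exact absurd (hbound N) (not_le.2 hN)
  have hone := measure_limsup_eq_one hsmeas hiis htsum
  have hcompl : P ((Filter.limsup s atTop)ᶜ) = 0 := by
    rw [measure_compl (MeasurableSet.measurableSet_limsup hsmeas) (measure_ne_top _ _), hone]
    simp
  have hae : ∀ᵐ ω ∂P, ω ∈ Filter.limsup s atTop := by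
    rw [ae_iff]
    simpa [Set.compl_def] using hcompl
  refine hae.mono fun ω hω => ?_
  rw [mem_limsup_iff_frequently_mem] at hω
  obtain ⟨n, hn⟩ := hω.exists
  exact ⟨n, fun i => by have := Set.mem_iInter.1 hn i; exact this⟩

/-- **The set of persistently non-modal points is null (`K`-nearest
neighbors).** Fix `K ≥ 2` and let `Qₙ = {x | Φ(x, Zₙ) > 0}` for the `K`-nearest
neighbor non-modal count heuristic `Φ`. If `X` is separable and the
`f`-boundary has measure zero, then `μ(limsup Qₙ) = 0` with probability one. -/
theorem nmc_knn_limsup_null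
    {X : Type*} [MetricSpace X] [TopologicalSpace.SeparableSpace X]
    [MeasurableSpace X] [BorelSpace X]
    {Y : Type*} [Countable Y]
    (μ : Measure X) [IsProbabilityMeasure μ] (f : X → Y)
    {Ω : Type*} [MeasurableSpace Ω] (P : Measure Ω) [IsProbabilityMeasure P]
    (K : ℕ) (hK : 2 ≤ K)
    -- the candidate-count function κ : ℕ⁺ → ℕ⁺ (κ (n+1) candidates at step n+1)
    (κ : ℕ → ℕ) (hκpos : ∀ n, 1 ≤ κ n)
    (hκ : ∀ ρ : ℝ, 0 < ρ → ρ ≤ 1 →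
      Tendsto (fun N => ∑ n ∈ Finset.Icc 1 N, ρ ^ κ n) atTop atTop)
    -- at step n+1, κ(n+1) candidates are drawn, iid with law μ
    (cand : (n : ℕ) → Fin (κ (n + 1)) → Ω → X)
    (hmeas : ∀ n i, Measurable (cand n i))
    (hlaw : ∀ n i, P.map (cand n i) = μ)
    (hindep : iIndepFun
      (fun p : Σ n : ℕ, Fin (κ (n + 1)) => cand p.1 p.2) P)
    -- the sample z_{n+1} is a candidate maximizing the heuristic Φ(·, Z_n)
    (z : ℕ → Ω → X)
    (hsel : ∀ ω n, ∃ i : Fin (κ (n + 1)), z (n + 1) ω = cand n i ω ∧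
      ∀ j : Fin (κ (n + 1)),
        nmcKNN f K (cand n j ω) (sampleSet z n ω) ≤
          nmcKNN f K (cand n i ω) (sampleSet z n ω))
    (hbdry : μ {b | IsFBoundaryPoint f μ b} = 0) :
    ∀ᵐ ω ∂P,
      μ (Filter.limsup (fun n => {x : X | 0 < nmcKNN f K x (sampleSet z n ω)}) atTop) = 0 := by

  classical
  rcases isEmpty_or_nonempty X with hX | hX
  · refine Filter.Eventually.of_forall fun ω => ?_
    have h0 : (Filter.limsup (fun n => {x : X | 0 < nmcKNN f K x (sampleSet z n ω)}) atTop)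
        = (∅ : Set X) := Set.eq_empty_of_isEmpty _
    rw [h0]
    exact measure_empty
  have hdense := TopologicalSpace.denseRange_denseSeq X
  set u : ℕ → X := TopologicalSpace.denseSeq X with hu
  set U : ℕ × ℚ → Set X := fun p => ball (u p.1) (p.2 : ℝ) with hUdef
  have hUopen : ∀ p, IsOpen (U p) := fun p => isOpen_ball
  have hUmeas : ∀ p, MeasurableSet (U p) := fun p => measurableSet_ball
  have hbasis : ∀ (x : X) (ε : ℝ), 0 < ε → ∃ p : ℕ × ℚ, x ∈ U p ∧ U p ⊆ ball x ε := by
    intro x ε hε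
    obtain ⟨q, hq1, hq2⟩ := exists_rat_btwn (by linarith : (ε / 4 : ℝ) < ε / 2)
    obtain ⟨n, hn⟩ := Metric.denseRange_iff.1 hdense x (ε / 4) (by linarith)
    refine ⟨(n, q), ?_, ?_⟩
    · show x ∈ ball (u n) (q : ℝ)
      rw [mem_ball]
      linarith
    · intro w hw
      rw [mem_ball] at hw ⊢
      have ht := dist_triangle w (u n) x
      have hd : dist (u n) x = dist x (u n) := dist_comm _ _
      linarith
  set T : (ℕ × ℚ) × Y → Set X := fun p => U p.1 ∩ {w | f w ≠ p.2} with hTdef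
  set M : Set X := ⋃ p : (ℕ × ℚ) × Y, if μ (T p) = 0 then T p else ∅ with hMdef
  have hMnull : μ M = 0 := by
    refine measure_iUnion_null fun p => ?_
    split_ifs with h
    · exact h
    · exact measure_empty
  set M' := toMeasurable μ M with hM'def
  have hM'null : μ M' = 0 := by rw [hM'def, measure_toMeasurable]; exact hMnull
  have hMM' : M ⊆ M' := subset_toMeasurable μ M
  have hM'meas : MeasurableSet M' := measurableSet_toMeasurable μ M
  have hsuppnull : μ {x : X | x ∉ measSupport μ} = 0 := by
    have hsub : {x : X | x ∉ measSupport μ}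
        ⊆ ⋃ p : ℕ × ℚ, if μ (U p) = 0 then U p else ∅ := by
      intro x hx
      have hx' : ¬ ∀ ε > 0, 0 < μ (ball x ε) := hx
      push_neg at hx'
      obtain ⟨ε, hε, hb⟩ := hx'
      have hb0 : μ (ball x ε) = 0 := le_antisymm hb zero_le
      obtain ⟨p, hxp, hpsub⟩ := hbasis x ε hε
      have hUp0 : μ (U p) = 0 :=
        le_antisymm (le_trans (measure_mono hpsub) hb0.le) zero_le
      exact Set.mem_iUnion.2 ⟨p, by rw [if_pos hUp0]; exact hxp⟩
    refine le_antisymm (le_trans (measure_mono hsub) ?_) zero_le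
    refine le_of_eq (measure_iUnion_null fun p => ?_)
    split_ifs with h
    · exact h
    · exact measure_empty
  have hG1 : ∀ᵐ ω ∂P, ∀ (n : ℕ) (i : Fin (κ (n + 1))), cand n i ω ∉ M' := by
    rw [ae_all_iff]
    intro n
    rw [ae_all_iff]
    intro i
    have hpre : P (cand n i ⁻¹' M') = 0 := by
      rw [← Measure.map_apply (hmeas n i) hM'meas, hlaw n i]
      exact hM'null
    rw [ae_iff]
    refine le_antisymm (le_trans (measure_mono ?_) hpre.le) zero_le
    intro ω hω
    simpa using hω
  have hG2 : ∀ᵐ ω ∂P, ∀ p : ℕ × ℚ, 0 < μ (U p) →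
      ∃ n, ∀ i : Fin (κ (n + 1)), cand n i ω ∈ U p := by
    rw [ae_all_iff]
    intro p
    by_cases hp : 0 < μ (U p)
    · exact (aux_BC μ P κ hκ cand hmeas hlaw hindep (U p) (hUmeas p) hp).mono
        fun ω h _ => h
    · exact Filter.Eventually.of_forall fun ω h => absurd h hp
  filter_upwards [hG1, hG2] with ω hω1 hω2
  have hzM : ∀ k, 1 ≤ k → z k ω ∉ M' := by
    intro k hk
    obtain ⟨m, rfl⟩ : ∃ m, k = m + 1 := ⟨k - 1, by omega⟩
    obtain ⟨i, hi, _⟩ := hsel ω m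
    rw [hi]
    exact hω1 m i
  have hzU : ∀ p, 0 < μ (U p) → ∃ k, 1 ≤ k ∧ z k ω ∈ U p := by
    intro p hp
    obtain ⟨n, hn⟩ := hω2 p hp
    obtain ⟨i, hi, _⟩ := hsel ω n
    exact ⟨n + 1, by omega, by rw [hi]; exact hn i⟩
  have hincl : Filter.limsup (fun n => {x : X | 0 < nmcKNN f K x (sampleSet z n ω)}) atTop
      ⊆ {x : X | x ∉ measSupport μ} ∪ {b : X | IsFBoundaryPoint f μ b} := by
    intro x hx
    by_contra hcon
    simp only [Set.mem_union, Set.mem_setOf_eq, not_or, not_not] at hcon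
    obtain ⟨hxsupp, hxbd⟩ := hcon
    rw [mem_limsup_iff_frequently_mem] at hx
    suffices hsuf : ∃ N, ∀ m, N ≤ m → nmcKNN f K x (sampleSet z m ω) = 0 by
      obtain ⟨N, hN⟩ := hsuf
      rw [Filter.frequently_atTop] at hx
      obtain ⟨m, hm1, hm2⟩ := hx N
      have hm2' : 0 < nmcKNN f K x (sampleSet z m ω) := hm2
      rw [hN m hm1] at hm2'
      exact lt_irrefl 0 hm2'
    by_cases hxZ : ∃ k, 1 ≤ k ∧ z k ω = x
    · obtain ⟨k, hk1, hk2⟩ := hxZ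
      refine ⟨k, fun m hm => ?_⟩
      have hxS : x ∈ sampleSet z m ω := ⟨k, hk1, hm, hk2⟩
      rw [nmcKNN, if_pos hxS]
    · have hxbd' : ∃ ε > 0, μ (ball x ε ∩ {w : X | f w ≠ f x}) = 0 := by
        by_contra h
        push_neg at h
        refine hxbd fun ε hε => ?_
        rcases (zero_le : 0 ≤ μ (ball x ε ∩ {w : X | f w ≠ f x})).lt_or_eq with h' | h'
        · exact h'
        · exact absurd h'.symm (h ε hε)
      obtain ⟨ε, hε, hεnull⟩ := hxbd'
      obtain ⟨p0, hxp0, hp0⟩ := hbasis x ε hε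
      have hT0null : μ (T (p0, f x)) = 0 := by
        refine le_antisymm (le_trans (measure_mono ?_) hεnull.le) zero_le
        exact Set.inter_subset_inter_left _ hp0
      have hT0M : T (p0, f x) ⊆ M := by
        intro w hw
        exact Set.mem_iUnion.2 ⟨(p0, f x), by rw [if_pos hT0null]; exact hw⟩
      obtain ⟨δ, hδ, hδsub⟩ := Metric.isOpen_iff.1 (hUopen p0) x hxp0
      have hinfin : {w : X | (∃ k, 1 ≤ k ∧ z k ω = w) ∧ w ∈ ball x δ}.Infinite := by
        by_contra hfin
        rw [Set.not_infinite] at hfin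
        have hxF : x ∉ hfin.toFinset := by
          rw [Set.Finite.mem_toFinset]
          exact fun h => hxZ h.1
        have hr : ∃ r, 0 < r ∧ r ≤ δ ∧ ∀ w ∈ hfin.toFinset, ¬ (dist w x < r) := by
          rcases hfin.toFinset.eq_empty_or_nonempty with hFe | hFne
          · exact ⟨δ, hδ, le_refl δ, by rw [hFe]; simp⟩
          · have hFne' := hFne.image (fun w => dist w x)
            obtain ⟨w, hwF, hwe⟩ := Finset.mem_image.1 (Finset.min'_mem _ hFne')
            refine ⟨min δ (dist w x), lt_min hδ ?_, min_le_left _ _, ?_⟩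
            · rw [dist_pos]
              intro hwx
              exact hxF (hwx ▸ hwF)
            · intro w' hw' hlt
              have hwe' : dist w x = (hfin.toFinset.image (fun w => dist w x)).min' hFne' :=
                hwe
              have h1 : (hfin.toFinset.image (fun w => dist w x)).min' hFne' ≤ dist w' x :=
                Finset.min'_le _ _ (Finset.mem_image_of_mem _ hw')
              rw [← hwe'] at h1
              have h2 : min δ (dist w x) ≤ dist w x := min_le_right _ _
              linarith
        obtain ⟨r, hr0, hrδ, hrF⟩ := hr
        obtain ⟨p1, hxp1, hp1⟩ := hbasis x r hr0
        have hp1pos : 0 < μ (U p1) := by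
          obtain ⟨r', hr', hr'sub⟩ := Metric.isOpen_iff.1 (hUopen p1) x hxp1
          exact lt_of_lt_of_le (hxsupp r' hr') (measure_mono hr'sub)
        obtain ⟨k, hk1, hkU⟩ := hzU p1 hp1pos
        have hkr : z k ω ∈ ball x r := hp1 hkU
        have hwF : z k ω ∈ hfin.toFinset := by
          rw [Set.Finite.mem_toFinset]
          exact ⟨⟨k, hk1, rfl⟩, ball_subset_ball hrδ hkr⟩
        exact hrF _ hwF (mem_ball.1 hkr)
      obtain ⟨Cs, hCs_sub, hCs_fin, hCs_card⟩ := Set.Infinite.exists_subset_ncard_eq hinfin K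
      set C := hCs_fin.toFinset with hCdef
      have hCcard : C.card = K := by
        rw [hCdef, ← Set.ncard_eq_toFinset_card Cs hCs_fin]
        exact hCs_card
      have hCmem : ∀ c ∈ C, (∃ k, 1 ≤ k ∧ z k ω = c) ∧ c ∈ ball x δ := by
        intro c hc
        exact hCs_sub (hCs_fin.mem_toFinset.1 hc)
      obtain ⟨N, hNsub⟩ := aux_exists_stage z ω C (fun c hc => (hCmem c hc).1)
      refine ⟨N, fun m hm => ?_⟩
      refine aux_nmcKNN_eq_zero f (K := K) (δ := δ) (by omega) (aux_sampleSet_finite z m ω) C hCcard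
        (fun c hc => aux_sampleSet_mono z hm ω (hNsub hc)) ?_ ?_
      · intro c hc
        have hcb := (hCmem c hc).2
        rw [mem_ball] at hcb
        rwa [dist_comm]
      · intro w hwS hwδ
        obtain ⟨k, hk1, _, hk3⟩ := hwS
        have hwM : w ∉ M' := hk3 ▸ hzM k hk1
        have hwU : w ∈ U p0 := hδsub (by rw [mem_ball, dist_comm]; exact hwδ)
        by_contra hne
        exact hwM (hMM' (hT0M ⟨hwU, hne⟩))
  refine le_antisymm ?_ zero_le
  calc μ (Filter.limsup (fun n => {x : X | 0 < nmcKNN f K x (sampleSet z n ω)}) atTop)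
      ≤ μ ({x : X | x ∉ measSupport μ} ∪ {b : X | IsFBoundaryPoint f μ b}) :=
        measure_mono hincl
    _ ≤ μ {x : X | x ∉ measSupport μ} + μ {b : X | IsFBoundaryPoint f μ b} :=
        measure_union_le _ _
    _ = 0 := by rw [hsuppnull, hbdry, add_zero]
end

section
/- Let κ : ℕ⁺ → ℕ⁺ satisfy κ(n) ≤ H_{⌈log₂(n+1)⌉} for all n ≥ 1, where H_k = Σ_{i=1}^{k} 1/i is the k-th harmonic number. Then for every real ρ with 0 < ρ ≤ 1, the series Σ_{n=1}^∞ ρ^{κ(n)} diverges to infinity. -/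
open Filter

theorem harmcast (n : ℕ) : (harmonic n : ℝ) = ∑ i ∈ Finset.Icc 1 n, (1:ℝ)/i := by
  simp [harmonic_eq_sum_Icc, one_div]
theorem gtend (ρ : ℝ) (h2 : 0 < ρ/2) (c : ℕ) :
    Tendsto (fun K : ℕ => (ρ/2) * ((2:ℝ)^K / (K:ℝ)^c)) atTop atTop := by
  have h1 : Tendsto (fun K : ℕ => (K:ℝ) * Real.log 2) atTop atTop :=
    tendsto_natCast_atTop_atTop.atTop_mul_const (Real.log_pos one_lt_two)
  have h3 := (Real.tendsto_exp_div_pow_atTop c).comp h1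
  have h4 := h3.const_mul_atTop (show (0:ℝ) < (Real.log 2)^c by positivity)
  have h5 : Tendsto (fun K : ℕ => (2:ℝ)^K / (K:ℝ)^c) atTop atTop := by
    refine h4.congr fun K => ?_
    have hl : Real.log 2 ≠ 0 := ne_of_gt (Real.log_pos one_lt_two)
    simp only [Function.comp]
    rw [mul_pow, Real.exp_nat_mul, Real.exp_log two_pos]
    rw [mul_comm ((K:ℝ)^c) (Real.log 2 ^ c), ← div_div,
      ← mul_div_assoc, ← mul_div_assoc, mul_div_cancel_left₀ _ (pow_ne_zero c hl)]
  exact h5.const_mul_atTop h2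
/-- **An admissible slowly-growing candidate count.** If
`κ(n) ≤ H_{⌈log₂(n+1)⌉}`, where `H_k = ∑_{i=1}^k 1/i` is the `k`-th harmonic
number, then for every `0 < ρ ≤ 1` the series `∑ ρ^{κ(n)}` diverges to
infinity. -/
theorem harmonic_log_kappa_admissible
    (κ : ℕ → ℕ) (hκpos : ∀ n, 1 ≤ κ n)
    (hκle : ∀ n, 1 ≤ n →
      (κ n : ℝ) ≤ ∑ i ∈ Finset.Icc 1 ⌈Real.logb 2 ((n : ℝ) + 1)⌉₊, (1 : ℝ) / i) :
    ∀ ρ : ℝ, 0 < ρ → ρ ≤ 1 →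
      Tendsto (fun N => ∑ n ∈ Finset.Icc 1 N, ρ ^ κ n) atTop atTop := by
  intro ρ hρ0 hρ1
  set c : ℕ := ⌈-Real.log ρ⌉₊ + 1 with hc
  have hg := gtend ρ (by positivity) c
  -- monotonicity of partial sums
  have hmono : Monotone (fun N => ∑ n ∈ Finset.Icc 1 N, ρ ^ κ n) := by
    intro a b hab
    exact Finset.sum_le_sum_of_subset_of_nonneg
      (Finset.Icc_subset_Icc_right hab) (fun i _ _ => pow_nonneg hρ0.le _)
  rw [tendsto_atTop]
  intro b
  obtain ⟨K, hK1, hKb⟩ := ((hg.eventually_ge_atTop b).and (eventually_ge_atTop 1)).exists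
  -- key: partial sum at 2^K - 1 is at least b
  have hKR : (1:ℝ) ≤ (K:ℝ) := by exact_mod_cast hKb
  have h2K : (1:ℕ) ≤ 2 ^ K := Nat.one_le_two_pow
  -- termwise bound
  have hterm : ∀ n ∈ Finset.Icc 1 (2 ^ K - 1), ρ * ((K:ℝ) ^ c)⁻¹ ≤ ρ ^ κ n := by
    intro n hn
    rw [Finset.mem_Icc] at hn
    have hn1 : 1 ≤ n := hn.1
    have hceil : ⌈Real.logb 2 ((n : ℝ) + 1)⌉₊ ≤ K := by
      rw [Nat.ceil_le]
      rw [Real.logb_le_iff_le_rpow one_lt_two (by positivity)]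
      rw [Real.rpow_natCast]
      have : (n : ℝ) + 1 ≤ ((2 ^ K : ℕ) : ℝ) := by
        have : n + 1 ≤ 2 ^ K := by omega
        exact_mod_cast this
      simpa using this
    have hHmono : ∑ i ∈ Finset.Icc 1 ⌈Real.logb 2 ((n : ℝ) + 1)⌉₊, (1:ℝ) / i
        ≤ ∑ i ∈ Finset.Icc 1 K, (1:ℝ) / i := by
      refine Finset.sum_le_sum_of_subset_of_nonneg
        (Finset.Icc_subset_Icc_right hceil) (fun i _ _ => by positivity)
    have hHlog : ∑ i ∈ Finset.Icc 1 K, (1:ℝ) / i ≤ 1 + Real.log K := by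
      rw [← harmcast]; exact harmonic_le_one_add_log K
    have hκ : (κ n : ℝ) ≤ 1 + Real.log K :=
      ((hκle n hn1).trans hHmono).trans hHlog
    set M : ℕ := ⌊1 + Real.log K⌋₊ with hM
    have hlogK : 0 ≤ Real.log K := Real.log_nonneg hKR
    have hκM : κ n ≤ M := Nat.le_floor hκ
    have h1 : ρ ^ M ≤ ρ ^ κ n := pow_le_pow_of_le_one hρ0.le hρ1 hκM
    refine le_trans ?_ h1
    have h2 : ρ ^ ((1:ℝ) + Real.log K) ≤ ρ ^ (M:ℝ) := by
      apply Real.rpow_le_rpow_of_exponent_ge hρ0 hρ1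
      exact Nat.floor_le (by linarith)
    rw [← Real.rpow_natCast ρ M]
    refine le_trans ?_ h2
    rw [Real.rpow_add hρ0, Real.rpow_one]
    have h3 : ((K:ℝ) ^ c)⁻¹ ≤ ρ ^ Real.log (K:ℝ) := by
      have e1 : ρ ^ Real.log (K:ℝ) = (K:ℝ) ^ Real.log ρ := by
        rw [Real.rpow_def_of_pos hρ0, Real.rpow_def_of_pos (by linarith),
          mul_comm]
      rw [e1, ← Real.rpow_natCast (K:ℝ) c, ← Real.rpow_neg (by linarith)]
      apply Real.rpow_le_rpow_of_exponent_le hKR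
      have : -Real.log ρ ≤ (c:ℝ) := by
        calc -Real.log ρ ≤ (⌈-Real.log ρ⌉₊ : ℝ) := Nat.le_ceil _
          _ ≤ (c:ℝ) := by exact_mod_cast Nat.le_succ _
      linarith
    exact mul_le_mul_of_nonneg_left h3 hρ0.le
  -- sum bound
  have hsum : b ≤ ∑ n ∈ Finset.Icc 1 (2 ^ K - 1), ρ ^ κ n := by
    have hcard : (Finset.Icc 1 (2 ^ K - 1)).card = 2 ^ K - 1 := by
      rw [Nat.card_Icc]; omega
    have hb := Finset.card_nsmul_le_sum _ _ _ hterm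
    rw [hcard, nsmul_eq_mul] at hb
    refine le_trans ?_ hb
    have hcast : ((2 ^ K - 1 : ℕ) : ℝ) = 2 ^ K - 1 := by
      push_cast [h2K]; ring
    rw [hcast]
    have hhalf : (2:ℝ) ^ K / 2 ≤ (2:ℝ) ^ K - 1 := by
      have : (2:ℝ) ≤ 2 ^ K := by
        calc (2:ℝ) = 2 ^ 1 := (pow_one 2).symm
          _ ≤ 2 ^ K := pow_le_pow_right₀ one_le_two hKb
      linarith
    have hpos : 0 ≤ ρ * ((K:ℝ) ^ c)⁻¹ := by positivity
    calc b ≤ ρ / 2 * ((2:ℝ) ^ K / (K:ℝ) ^ c) := hK1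
      _ = (2:ℝ) ^ K / 2 * (ρ * ((K:ℝ) ^ c)⁻¹) := by ring
      _ ≤ ((2:ℝ) ^ K - 1) * (ρ * ((K:ℝ) ^ c)⁻¹) := by
          exact mul_le_mul_of_nonneg_right hhalf hpos
  exact eventually_atTop.2 ⟨2 ^ K - 1, fun N hN => hsum.trans (hmono hN)⟩
end

section
/- Let X = [0,1] ⊂ ℝ with the Euclidean metric and Lebesgue measure μ, and let Y = {0,1}. Fix reals ε_i with 0 < ε_i < 1/2^{i+1} for each i ≥ 1, let X₁ = {0} ∪ ⋃_{i=1}^∞ (1/2^i, 3/2^{i+1} + ε_i], and let f be the indicator function of X₁. Define the sample sequence z_1 = 0 and z_n = 2^{2−n} for n ≥ 2, and let ζ_n be the nearest neighbor prediction based on Z_n = {z_1,…,z_n}. Then for every n ≥ 2, μ({x ∈ [0,1] : ζ_n(x) = f(x)}) < μ({x ∈ [0,1] : ζ_{n−1}(x) = f(x)}); that is, the accuracy of the nearest neighbor predictions is strictly decreasing in n. -/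
open MeasureTheory


lemma ssmf_inter
    (ε : ℕ → ℝ) (hε : ∀ i, 1 ≤ i → 0 < ε i ∧ ε i < 1 / 2 ^ (i + 1))
    (X₁ : Set ℝ)
    (hX₁ : X₁ = {0} ∪ ⋃ i ∈ {i : ℕ | 1 ≤ i},
      Set.Ioc ((1 : ℝ) / 2 ^ i) (3 / 2 ^ (i + 1) + ε i))
    (m : ℕ) (hm : 1 ≤ m) :
    X₁ ∩ Set.Icc ((1:ℝ)/2^m) (2/2^m) = Set.Ioc ((1:ℝ)/2^m) (3/2^(m+1) + ε m) := by
  have h2m : (0:ℝ) < 2^m := by positivity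
  have ht : (3:ℝ)/2^(m+1) + ε m < 2/2^m := by
    have := (hε m hm).2
    have e : (2:ℝ)/2^m = 4/2^(m+1) := by rw [pow_succ]; ring
    rw [e]; linarith [(show (3:ℝ)/2^(m+1) + 1/2^(m+1) = 4/2^(m+1) by ring)]
  have ha : (1:ℝ)/2^m < 3/2^(m+1) + ε m := by
    have := (hε m hm).1
    have e : (1:ℝ)/2^m = 2/2^(m+1) := by rw [pow_succ]; ring
    have h0 : (0:ℝ) < 1/2^(m+1) := by positivity
    rw [e]
    linarith [(show (2:ℝ)/2^(m+1) + 1/2^(m+1) = 3/2^(m+1) by ring)]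
  subst hX₁
  ext x
  simp only [Set.mem_inter_iff, Set.mem_union, Set.mem_singleton_iff, Set.mem_iUnion,
    Set.mem_Ioc, Set.mem_Icc, Set.mem_setOf_eq]
  constructor
  · rintro ⟨h | ⟨i, hi, h1, h2⟩, hab⟩
    · exfalso
      have : (0:ℝ) < 1/2^m := by positivity
      linarith [hab.1]
    · -- show i = m
      have him : i = m := by
        by_contra hne
        rcases lt_or_gt_of_ne hne with hlt | hgt
        · -- i < m : 1/2^i ≥ 2/2^m, so x > 2/2^m contradiction with x ≤ 2/2^m
          have : (2:ℝ)/2^m ≤ 1/2^i := by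
            rw [div_le_div_iff₀ h2m (by positivity : (0:ℝ) < (2:ℝ)^i)]
            have : (2:ℝ)^(i+1) ≤ 2^m := by
              apply pow_le_pow_right₀ (by norm_num); omega
            rw [pow_succ] at this; linarith
          linarith [hab.2]
        · -- i > m : top_i < 1/2^m ≤ x contradiction with x ≤ top_i
          have : (3:ℝ)/2^(i+1) + ε i < 1/2^m := by
            have hi1 := (hε i hi).2
            have : (4:ℝ)/2^(i+1) ≤ 1/2^m := by
              rw [div_le_div_iff₀ (by positivity : (0:ℝ) < (2:ℝ)^(i+1)) h2m]
              have : (2:ℝ)^(m+2) ≤ 2^(i+1) := by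
                apply pow_le_pow_right₀ (by norm_num); omega
              have e : (2:ℝ)^(m+2) = 4*2^m := by rw [pow_add]; ring
              linarith
            linarith [(show (3:ℝ)/2^(i+1) + 1/2^(i+1) = 4/2^(i+1) by ring)]
          linarith [hab.1]
      subst him
      exact ⟨h1, h2⟩
  · rintro ⟨h1, h2⟩
    refine ⟨Or.inr ⟨m, hm, h1, h2⟩, le_of_lt h1, le_trans h2 (le_of_lt ht)⟩



lemma ssmf_pow_notMem
    (ε : ℕ → ℝ) (hε : ∀ i, 1 ≤ i → 0 < ε i ∧ ε i < 1 / 2 ^ (i + 1))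
    (X₁ : Set ℝ)
    (hX₁ : X₁ = {0} ∪ ⋃ i ∈ {i : ℕ | 1 ≤ i},
      Set.Ioc ((1 : ℝ) / 2 ^ i) (3 / 2 ^ (i + 1) + ε i))
    (w : ℤ) : (2:ℝ)^w ∉ X₁ := by
  have hw : (0:ℝ) < 2^w := zpow_pos (by norm_num) w
  subst hX₁
  rintro (h | h)
  · simp only [Set.mem_singleton_iff] at h
    linarith
  · simp only [Set.mem_iUnion, Set.mem_Ioc, Set.mem_setOf_eq] at h
    obtain ⟨i, hi, h1, h2⟩ := h
    have e1 : (1:ℝ)/2^i = (2:ℝ)^(-(i:ℤ)) := by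
      rw [zpow_neg, zpow_natCast]; ring
    rw [e1] at h1
    have : -(i:ℤ) < w := by
      exact_mod_cast (zpow_lt_zpow_iff_right₀ (by norm_num : (1:ℝ) < 2)).mp h1
    have hge : (2:ℝ)^(1-(i:ℤ)) ≤ 2^w := by
      apply zpow_le_zpow_right₀ (by norm_num : (1:ℝ) ≤ 2); omega
    have e2 : (2:ℝ)^(1-(i:ℤ)) = 4/2^(i+1) := by
      rw [sub_eq_add_neg, zpow_add₀ (by norm_num : (2:ℝ) ≠ 0), zpow_neg, zpow_natCast]
      rw [pow_succ]; ring
    have := (hε i hi).2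
    rw [e2] at hge
    have h4 : (3:ℝ)/2^(i+1) + ε i < 4/2^(i+1) := by
      have : (3:ℝ)/2^(i+1) + 1/2^(i+1) = 4/2^(i+1) := by ring
      linarith
    linarith

lemma ssmf_zeta_low
    (X₁ : Set ℝ) (hX₀ : (0:ℝ) ∈ X₁)
    (f : ℝ → ℕ) (hf : f = X₁.indicator fun _ => 1)
    (z : ℕ → ℝ) (hz1 : z 1 = 0) (hzn : ∀ n, 2 ≤ n → z n = (2 : ℝ) ^ (2 - (n : ℤ)))
    (ζ : ℕ → ℝ → ℕ)
    (hζ : ∀ n, 1 ≤ n → ∀ x, ∃ i, 1 ≤ i ∧ i ≤ n ∧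
      (∀ j, 1 ≤ j → j ≤ n → |x - z i| ≤ |x - z j|) ∧ ζ n x = f (z i))
    (k : ℕ) (hk : 1 ≤ k) (x : ℝ) (hx0 : 0 ≤ x) (hx : x < 2/2^k) :
    ζ k x = 1 := by
  obtain ⟨i, hi1, hik, hmin, hval⟩ := hζ k hk x
  rcases eq_or_lt_of_le hi1 with h1 | h2
  · rw [hval, ← h1, hz1, hf, Set.indicator_of_mem hX₀]
  · exfalso
    have hzi : z i = 2^(2-(i:ℤ)) := hzn i h2
    have hge : (2:ℝ)^(2-(k:ℤ)) ≤ 2^(2-(i:ℤ)) := by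
      apply zpow_le_zpow_right₀ (by norm_num : (1:ℝ) ≤ 2)
      have : (i:ℤ) ≤ k := by exact_mod_cast hik
      omega
    have e : (2:ℝ)^(2-(k:ℤ)) = 4/2^k := by
      rw [sub_eq_add_neg, zpow_add₀ (by norm_num : (2:ℝ) ≠ 0), zpow_neg, zpow_natCast]
      norm_num; ring
    have hm1 : |x - z i| ≤ x := by
      have := hmin 1 le_rfl hk
      rwa [hz1, sub_zero, abs_of_nonneg hx0] at this
    have hlb : z i - x ≤ |x - z i| := by rw [abs_sub_comm]; exact le_abs_self _
    rw [hzi] at hlb hm1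
    rw [e] at hge
    have : (4:ℝ)/2^k = 2*(2/2^k) := by ring
    linarith

lemma ssmf_zeta_high
    (ε : ℕ → ℝ) (hε : ∀ i, 1 ≤ i → 0 < ε i ∧ ε i < 1 / 2 ^ (i + 1))
    (X₁ : Set ℝ)
    (hX₁ : X₁ = {0} ∪ ⋃ i ∈ {i : ℕ | 1 ≤ i},
      Set.Ioc ((1 : ℝ) / 2 ^ i) (3 / 2 ^ (i + 1) + ε i))
    (f : ℝ → ℕ) (hf : f = X₁.indicator fun _ => 1)
    (z : ℕ → ℝ) (hz1 : z 1 = 0) (hzn : ∀ n, 2 ≤ n → z n = (2 : ℝ) ^ (2 - (n : ℤ)))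
    (ζ : ℕ → ℝ → ℕ)
    (hζ : ∀ n, 1 ≤ n → ∀ x, ∃ i, 1 ≤ i ∧ i ≤ n ∧
      (∀ j, 1 ≤ j → j ≤ n → |x - z i| ≤ |x - z j|) ∧ ζ n x = f (z i))
    (k : ℕ) (hk : 2 ≤ k) (x : ℝ) (hx : 2/2^k < x) :
    ζ k x = 0 := by
  obtain ⟨i, hi1, hik, hmin, hval⟩ := hζ k (by omega) x
  have h2k : (0:ℝ) < 2^k := by positivity
  have hx0 : 0 < x := lt_trans (by positivity) hx
  have hzk : z k = 4/2^k := by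
    rw [hzn k hk, sub_eq_add_neg, zpow_add₀ (by norm_num : (2:ℝ) ≠ 0), zpow_neg, zpow_natCast]
    norm_num; ring
  have h4 : (0:ℝ) < 4/2^k := by positivity
  have he42 : (4:ℝ)/2^k = 2*(2/2^k) := by ring
  have habs : |x - z k| < x := by
    rw [hzk, abs_lt]
    exact ⟨by linarith, by linarith⟩
  rcases eq_or_lt_of_le hi1 with h1 | h2
  · exfalso
    have hmk := hmin k (by omega) le_rfl
    rw [← h1, hz1, sub_zero, abs_of_pos hx0] at hmk
    linarith
  · have hzi : z i = 2^(2-(i:ℤ)) := hzn i h2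
    rw [hval, hzi, hf, Set.indicator_of_notMem]
    exact ssmf_pow_notMem ε hε X₁ hX₁ _



lemma ssmf_vol
    (ε : ℕ → ℝ) (hε : ∀ i, 1 ≤ i → 0 < ε i ∧ ε i < 1 / 2 ^ (i + 1))
    (X₁ : Set ℝ)
    (hX₁ : X₁ = {0} ∪ ⋃ i ∈ {i : ℕ | 1 ≤ i},
      Set.Ioc ((1 : ℝ) / 2 ^ i) (3 / 2 ^ (i + 1) + ε i))
    (f : ℝ → ℕ) (hf : f = X₁.indicator fun _ => 1)
    (z : ℕ → ℝ) (hz1 : z 1 = 0) (hzn : ∀ n, 2 ≤ n → z n = (2 : ℝ) ^ (2 - (n : ℤ)))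
    (ζ : ℕ → ℝ → ℕ)
    (hζ : ∀ n, 1 ≤ n → ∀ x, ∃ i, 1 ≤ i ∧ i ≤ n ∧
      (∀ j, 1 ≤ j → j ≤ n → |x - z i| ≤ |x - z j|) ∧ ζ n x = f (z i))
    (k : ℕ) (hk : 1 ≤ k) :
    volume {x ∈ Set.Icc (0:ℝ) 1 | ζ k x = f x} =
      volume ((Set.Ico (0:ℝ) (2/2^k) ∩ X₁) ∪ (Set.Ioc ((2:ℝ)/2^k) 1 \ X₁)) := by
  set c : ℝ := 2/2^k with hc
  have hX₀ : (0:ℝ) ∈ X₁ := by rw [hX₁]; exact Or.inl rfl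
  have hc0 : 0 < c := by positivity
  have hc1 : c ≤ 1 := by
    rw [hc, div_le_one (by positivity)]
    calc (2:ℝ) = 2^1 := (pow_one 2).symm
    _ ≤ 2^k := pow_le_pow_right₀ one_le_two hk
  have f1 : ∀ x, x ∈ X₁ → f x = 1 := fun x hx => by rw [hf, Set.indicator_of_mem hx]
  have f0 : ∀ x, x ∉ X₁ → f x = 0 := fun x hx => by rw [hf, Set.indicator_of_notMem hx]
  have claim : ∀ x : ℝ, x ≠ c →
      (x ∈ {x ∈ Set.Icc (0:ℝ) 1 | ζ k x = f x} ↔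
        x ∈ (Set.Ico (0:ℝ) c ∩ X₁) ∪ (Set.Ioc c 1 \ X₁)) := by
    intro x hxc
    constructor
    · rintro ⟨⟨hx0, hx1⟩, hfx⟩
      rcases lt_or_gt_of_ne hxc with hlt | hgt
      · have hz : ζ k x = 1 := ssmf_zeta_low X₁ hX₀ f hf z hz1 hzn ζ hζ k hk x hx0 hlt
        left
        refine ⟨⟨hx0, hlt⟩, ?_⟩
        by_contra hX
        rw [hz, f0 x hX] at hfx
        exact one_ne_zero hfx
      · have hk2 : 2 ≤ k := by
          rcases Nat.lt_or_ge k 2 with h | h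
          · exfalso
            have hk1 : k = 1 := by omega
            have hce : c = 1 := by rw [hc, hk1]; norm_num
            linarith
          · exact h
        have hz : ζ k x = 0 := ssmf_zeta_high ε hε X₁ hX₁ f hf z hz1 hzn ζ hζ k hk2 x hgt
        right
        refine ⟨⟨hgt, hx1⟩, ?_⟩
        intro hX
        rw [hz, f1 x hX] at hfx
        exact zero_ne_one hfx
    · rintro (⟨⟨hx0, hlt⟩, hX⟩ | ⟨⟨hgt, hx1⟩, hX⟩)
      · refine ⟨⟨hx0, le_trans hlt.le hc1⟩, ?_⟩
        rw [ssmf_zeta_low X₁ hX₀ f hf z hz1 hzn ζ hζ k hk x hx0 hlt, f1 x hX]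
      · have hk2 : 2 ≤ k := by
          rcases Nat.lt_or_ge k 2 with h | h
          · exfalso
            have hk1 : k = 1 := by omega
            have hce : c = 1 := by rw [hc, hk1]; norm_num
            linarith
          · exact h
        refine ⟨⟨le_trans hc0.le hgt.le, hx1⟩, ?_⟩
        rw [ssmf_zeta_high ε hε X₁ hX₁ f hf z hz1 hzn ζ hζ k hk2 x hgt, f0 x hX]
  apply measure_congr
  rw [MeasureTheory.ae_eq_set]
  constructor
  · apply measure_mono_null (t := {c}) ?_ (measure_singleton c)
    intro x ⟨hx, hnx⟩
    by_contra hne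
    exact hnx ((claim x hne).1 hx)
  · apply measure_mono_null (t := {c}) ?_ (measure_singleton c)
    intro x ⟨hx, hnx⟩
    by_contra hne
    exact hnx ((claim x hne).2 hx)

/-- **Selective sampling may fail badly.** On `X = [0,1]` with Lebesgue
measure, let `X₁ = {0} ∪ ⋃_{i≥1} (1/2^i, 3/2^{i+1} + ε_i]` with
`0 < ε_i < 1/2^{i+1}`, let `f` be the indicator function of `X₁`, and take the
samples `z_1 = 0`, `z_n = 2^{2-n}` for `n ≥ 2`. Then the accuracy of the
nearest neighbor predictions `ζ_n` is strictly decreasing in `n` for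
`n ≥ 2`. -/
theorem selective_sampling_may_fail
    (ε : ℕ → ℝ) (hε : ∀ i, 1 ≤ i → 0 < ε i ∧ ε i < 1 / 2 ^ (i + 1))
    (X₁ : Set ℝ)
    (hX₁ : X₁ = {0} ∪ ⋃ i ∈ {i : ℕ | 1 ≤ i},
      Set.Ioc ((1 : ℝ) / 2 ^ i) (3 / 2 ^ (i + 1) + ε i))
    (f : ℝ → ℕ) (hf : f = X₁.indicator fun _ => 1)
    (z : ℕ → ℝ) (hz1 : z 1 = 0) (hzn : ∀ n, 2 ≤ n → z n = (2 : ℝ) ^ (2 - (n : ℤ)))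
    -- ζ_n is a nearest neighbor prediction over Z_n = {z_1, …, z_n}
    -- (ties broken arbitrarily)
    (ζ : ℕ → ℝ → ℕ)
    (hζ : ∀ n, 1 ≤ n → ∀ x, ∃ i, 1 ≤ i ∧ i ≤ n ∧
      (∀ j, 1 ≤ j → j ≤ n → |x - z i| ≤ |x - z j|) ∧ ζ n x = f (z i)) :
    ∀ n, 2 ≤ n →
      volume {x ∈ Set.Icc (0 : ℝ) 1 | ζ n x = f x} <
        volume {x ∈ Set.Icc (0 : ℝ) 1 | ζ (n - 1) x = f x} := by
  intro n hn
  set m := n - 1 with hmdef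
  have hm : 1 ≤ m := by omega
  have hnm : n = m + 1 := by omega
  set a : ℝ := 1/2^m with ha
  set b : ℝ := 2/2^m with hb
  set t : ℝ := 3/2^(m+1) + ε m with htdef
  have h2m : (0:ℝ) < 2^m := by positivity
  have e1 : (1:ℝ)/2^m = 2/2^(m+1) := by rw [pow_succ]; ring
  have e2 : (2:ℝ)/2^m = 4/2^(m+1) := by rw [pow_succ]; ring
  have hεm := hε m hm
  have ha0 : 0 < a := by positivity
  have hab : a < b := by
    rw [ha, hb, div_lt_div_iff₀ h2m h2m]; linarith
  have hta : a < t := by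
    rw [ha, e1, htdef]
    have h0 : (0:ℝ) < 1/2^(m+1) := by positivity
    linarith [(show (2:ℝ)/2^(m+1) + 1/2^(m+1) = 3/2^(m+1) by ring)]
  have htb : t < b := by
    rw [hb, e2, htdef]
    linarith [(show (3:ℝ)/2^(m+1) + 1/2^(m+1) = 4/2^(m+1) by ring), hεm.2]
  have hb1 : b ≤ 1 := by
    rw [hb, div_le_one h2m]
    calc (2:ℝ) = 2^1 := (pow_one 2).symm
    _ ≤ 2^m := pow_le_pow_right₀ one_le_two hm
  have hkey : ∀ x, a ≤ x → x ≤ b → (x ∈ X₁ ↔ a < x ∧ x ≤ t) := by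
    intro x hax hxb
    have := ssmf_inter ε hε X₁ hX₁ m hm
    constructor
    · intro hX
      have : x ∈ X₁ ∩ Set.Icc ((1:ℝ)/2^m) (2/2^m) := ⟨hX, hax, hxb⟩
      rw [ssmf_inter ε hε X₁ hX₁ m hm] at this
      exact this
    · intro hx
      have : x ∈ Set.Ioc ((1:ℝ)/2^m) (3/2^(m+1) + ε m) := hx
      rw [← ssmf_inter ε hε X₁ hX₁ m hm] at this
      exact this.1
  -- the two "nice" sets
  set Ga : Set ℝ := (Set.Ico (0:ℝ) a ∩ X₁) ∪ (Set.Ioc a 1 \ X₁) with hGa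
  set Gb : Set ℝ := (Set.Ico (0:ℝ) b ∩ X₁) ∪ (Set.Ioc b 1 \ X₁) with hGb
  have hXmeas : MeasurableSet X₁ := by
    rw [hX₁]
    exact (measurableSet_singleton 0).union
      (MeasurableSet.biUnion (Set.to_countable _) fun i _ => measurableSet_Ioc)
  have hGam : MeasurableSet Ga :=
    (measurableSet_Ico.inter hXmeas).union (measurableSet_Ioc.diff hXmeas)
  have hGbm : MeasurableSet Gb :=
    (measurableSet_Ico.inter hXmeas).union (measurableSet_Ioc.diff hXmeas)
  have h_out : Ga \ Set.Icc a b = Gb \ Set.Icc a b := by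
    ext x
    simp only [hGa, hGb, Set.mem_diff, Set.mem_union, Set.mem_inter_iff, Set.mem_Ico,
      Set.mem_Ioc, Set.mem_Icc, not_and, not_le]
    constructor
    · rintro ⟨h, hns⟩
      refine ⟨?_, hns⟩
      rcases lt_or_ge x a with h1 | h1
      · rcases h with ⟨⟨hx0, _⟩, hX⟩ | ⟨⟨hax, _⟩, _⟩
        · exact Or.inl ⟨⟨hx0, lt_trans h1 hab⟩, hX⟩
        · linarith
      · have h2 : b < x := hns h1
        rcases h with ⟨⟨_, hxa⟩, _⟩ | ⟨⟨_, hx1⟩, hX⟩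
        · linarith
        · exact Or.inr ⟨⟨h2, hx1⟩, hX⟩
    · rintro ⟨h, hns⟩
      refine ⟨?_, hns⟩
      rcases lt_or_ge x a with h1 | h1
      · rcases h with ⟨⟨hx0, _⟩, hX⟩ | ⟨⟨hbx, _⟩, _⟩
        · exact Or.inl ⟨⟨hx0, h1⟩, hX⟩
        · linarith
      · have h2 : b < x := hns h1
        rcases h with ⟨⟨_, hxb⟩, _⟩ | ⟨⟨_, hx1⟩, hX⟩
        · linarith
        · exact Or.inr ⟨⟨lt_trans hab h2, hx1⟩, hX⟩
  have h_in_a : Ga ∩ Set.Icc a b = Set.Ioc t b := by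
    ext x
    simp only [hGa, Set.mem_inter_iff, Set.mem_union, Set.mem_Ico, Set.mem_Ioc,
      Set.mem_Icc]
    constructor
    · rintro ⟨⟨⟨_, hxa⟩, _⟩ | ⟨⟨hax, hx1⟩, hX⟩, hax', hxb⟩
      · linarith
      · refine ⟨?_, hxb⟩
        by_contra hcon
        push_neg at hcon
        exact hX ((hkey x hax' hxb).2 ⟨hax, hcon⟩)
    · rintro ⟨htx, hxb⟩
      have hax : a < x := lt_trans hta htx
      refine ⟨Or.inr ⟨⟨hax, le_trans hxb hb1⟩, fun hX => ?_⟩, hax.le, hxb⟩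
      have := ((hkey x hax.le hxb).1 hX).2
      linarith
  have h_in_b : Gb ∩ Set.Icc a b = Set.Ioc a t := by
    ext x
    simp only [hGb, Set.mem_inter_iff, Set.mem_union, Set.mem_Ico, Set.mem_Ioc,
      Set.mem_Icc]
    constructor
    · rintro ⟨⟨⟨_, hxb'⟩, hX⟩ | ⟨⟨hbx, _⟩, _⟩, hax, hxb⟩
      · exact (hkey x hax hxb).1 hX
      · linarith
    · rintro ⟨hax, hxt⟩
      have hxb : x ≤ b := le_trans hxt htb.le
      refine ⟨Or.inl ⟨⟨le_trans ha0.le hax.le, lt_of_le_of_lt hxt htb⟩, ?_⟩, hax.le, hxb⟩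
      exact (hkey x hax.le hxb).2 ⟨hax, hxt⟩
  have hfin : volume (Gb \ Set.Icc a b) ≠ ⊤ := by
    have hsub : Gb \ Set.Icc a b ⊆ Set.Icc (0:ℝ) 1 := by
      rintro x ⟨hx, _⟩
      rcases hx with ⟨⟨hx0, hxb⟩, _⟩ | ⟨⟨hbx, hx1⟩, _⟩
      · exact ⟨hx0, le_trans hxb.le hb1⟩
      · exact ⟨le_trans (by positivity : (0:ℝ) ≤ b) hbx.le, hx1⟩
    exact ne_top_of_le_ne_top (by simp [Real.volume_Icc]) (measure_mono hsub)
  have hlt : volume (Set.Ioc t b) < volume (Set.Ioc a t) := by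
    rw [Real.volume_Ioc, Real.volume_Ioc]
    rw [ENNReal.ofReal_lt_ofReal_iff (by linarith)]
    rw [ha, hb, e1, e2, htdef]
    linarith [hεm.1, (show (2:ℝ)/2^(m+1) + 1/2^(m+1) = 3/2^(m+1) by ring),
      (show (3:ℝ)/2^(m+1) + 1/2^(m+1) = 4/2^(m+1) by ring)]
  have hvn := ssmf_vol ε hε X₁ hX₁ f hf z hz1 hzn ζ hζ n (by omega)
  have hvm := ssmf_vol ε hε X₁ hX₁ f hf z hz1 hzn ζ hζ m hm
  have ean : (2:ℝ)/2^n = a := by rw [ha, hnm, pow_succ]; ring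
  rw [hvn, hvm, ean]
  have ebm : (2:ℝ)/2^m = b := hb.symm
  rw [ebm]
  calc volume Ga = volume (Ga ∩ Set.Icc a b) + volume (Ga \ Set.Icc a b) :=
        (measure_inter_add_diff Ga measurableSet_Icc).symm
    _ = volume (Set.Ioc t b) + volume (Gb \ Set.Icc a b) := by rw [h_in_a, h_out]
    _ < volume (Set.Ioc a t) + volume (Gb \ Set.Icc a b) :=
        ENNReal.add_lt_add_right hfin hlt
    _ = volume (Gb ∩ Set.Icc a b) + volume (Gb \ Set.Icc a b) := by rw [h_in_b]
    _ = volume Gb := measure_inter_add_diff Gb measurableSet_Icc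
end

section
/- Fix an integer m > 1. Let {z_n} be generated by the selective sampling process S(κ,Φ) where Φ(x,S) = inf{d(x,s) : s ∈ S} is the distance-to-sample-set heuristic and κ satisfies Σ_{n=1}^∞ ρ^{κ(n)} = ∞ for every 0 < ρ ≤ 1. If x ∈ supp(μ) is not an f-boundary point, then the m nearest neighbors predictions satisfy ζ_n(x) → f(x) with probability one. -/
open MeasureTheory ProbabilityTheory Filter Metric

lemma aux_freq {X : Type*} [MeasurableSpace X] {Ω : Type*} [MeasurableSpace Ω]
    (μ : Measure X) [IsProbabilityMeasure μ]
    (P : Measure Ω) [IsProbabilityMeasure P]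
    (κ : ℕ → ℕ)
    (hκ : ∀ ρ : ℝ, 0 < ρ → ρ ≤ 1 →
      Tendsto (fun N => ∑ n ∈ Finset.Icc 1 N, ρ ^ κ n) atTop atTop)
    (cand : (n : ℕ) → Fin (κ (n + 1)) → Ω → X)
    (hmeas : ∀ n i, Measurable (cand n i))
    (hlaw : ∀ n i, P.map (cand n i) = μ)
    (hindep : iIndepFun
      (m := fun _ : Σ n : ℕ, Fin (κ (n + 1)) => (inferInstance : MeasurableSpace X))
      (fun p => cand p.1 p.2) P)
    (B : Set X) (hB : MeasurableSet B) (hB0 : 0 < μ B) :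
    ∀ᵐ ω ∂P, ∃ᶠ n in atTop, ∀ i, cand n i ω ∈ B := by
  classical
  set E : ℕ → Set Ω := fun n => ⋂ i, cand n i ⁻¹' B with hEdef
  have hE : ∀ n, MeasurableSet (E n) := fun n =>
    MeasurableSet.iInter fun i => (hmeas n i) hB
  have hPP : ∀ n i, P (cand n i ⁻¹' B) = μ B := fun n i => by
    rw [← hlaw n i, Measure.map_apply (hmeas n i) hB]
  -- key product formula
  have key : ∀ T : Finset ℕ, P (⋂ n ∈ T, E n) = ∏ n ∈ T, (μ B) ^ κ (n + 1) := by
    intro T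
    have h1 := hindep.meas_biInter
      (S := T.sigma fun n => (Finset.univ : Finset (Fin (κ (n + 1)))))
      (s := fun p => cand p.1 p.2 ⁻¹' B) (fun p _ => ⟨B, hB, rfl⟩)
    have hset : (⋂ p ∈ T.sigma fun n => (Finset.univ : Finset (Fin (κ (n + 1)))),
        cand p.1 p.2 ⁻¹' B) = ⋂ n ∈ T, E n := by
      ext ω
      simp only [Set.mem_iInter, Finset.mem_sigma, Finset.mem_univ, and_true, hEdef,
        Set.mem_preimage]
      constructor
      · intro h n hn i
        exact h ⟨n, i⟩ hn
      · rintro h ⟨n, i⟩ hn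
        exact h n hn i
    rw [hset] at h1
    rw [h1, Finset.prod_sigma]
    refine Finset.prod_congr rfl fun n _ => ?_
    simp [hPP]
  have Pen : ∀ n, P (E n) = (μ B) ^ κ (n + 1) := by
    intro n
    have := key {n}
    simpa using this
  have hii : iIndepSet E P := by
    rw [iIndepSet_iff_meas_biInter hE]
    intro T
    rw [key T]
    exact (Finset.prod_congr rfl fun n _ => Pen n).symm
  have htop : (∑' n, P (E n)) = ⊤ := by
    by_contra h
    set ρ : ℝ := (μ B).toReal with hρdef
    have haT : μ B ≠ ⊤ := measure_ne_top μ B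
    have hρ0 : 0 < ρ := ENNReal.toReal_pos hB0.ne' haT
    have hρ1 : ρ ≤ 1 := by
      have h1 : μ B ≤ 1 := prob_le_one
      simpa using ENNReal.toReal_mono (by simp) h1
    have hbound : ∀ N, (∑ n ∈ Finset.Icc 1 N, ρ ^ κ n) ≤ (∑' n, P (E n)).toReal := by
      intro N
      have hIcc : ∑ n ∈ Finset.Icc 1 N, (μ B) ^ κ n
          = ∑ k ∈ Finset.range N, P (E k) := by
        rw [← Finset.Ico_add_one_right_eq_Icc, Finset.sum_Ico_eq_sum_range]
        simp only [Nat.add_sub_cancel]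
        refine Finset.sum_congr rfl fun k _ => ?_
        rw [Pen k, add_comm]
      have hle : ∑ n ∈ Finset.Icc 1 N, (μ B) ^ κ n ≤ ∑' n, P (E n) := by
        rw [hIcc]
        exact ENNReal.sum_le_tsum _
      have := ENNReal.toReal_mono h hle
      calc (∑ n ∈ Finset.Icc 1 N, ρ ^ κ n)
          = (∑ n ∈ Finset.Icc 1 N, (μ B) ^ κ n).toReal := by
            rw [ENNReal.toReal_sum (fun n _ => ENNReal.pow_ne_top haT)]
            exact Finset.sum_congr rfl fun n _ => by rw [ENNReal.toReal_pow]
        _ ≤ (∑' n, P (E n)).toReal := this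
    obtain ⟨N, hN⟩ := ((hκ ρ hρ0 hρ1).eventually
      (eventually_ge_atTop ((∑' n, P (E n)).toReal + 1))).exists
    have := hbound N
    linarith
  have h1 := measure_limsup_eq_one hE hii htop
  have hms : MeasurableSet (limsup E atTop) := MeasurableSet.measurableSet_limsup hE
  have hae : ∀ᵐ ω ∂P, ω ∈ limsup E atTop := by
    rw [ae_iff]
    have : {ω | ¬ ω ∈ limsup E atTop} = (limsup E atTop)ᶜ := rfl
    rw [this, measure_compl hms (measure_ne_top _ _), h1, measure_univ, tsub_self]
  filter_upwards [hae] with ω hω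
  rw [mem_limsup_iff_frequently_mem] at hω
  exact hω.mono fun n hn i => Set.mem_iInter.1 hn i


lemma det_lemma {X Ω Y : Type*} [MetricSpace X] (f : X → Y) (m : ℕ) (hm : 1 < m)
    (z : ℕ → Ω → X) (ζ : ℕ → Ω → X → Y) (ω : Ω) (x : X) (ε : ℝ) (hε : 0 < ε)
    (hnear : ∀ δ : ℝ, 0 < δ → ∃ k, 1 ≤ k ∧ z k ω ∈ ball x δ)
    (hfval : ∀ k, 1 ≤ k → z k ω ∈ ball x ε → f (z k ω) = f x)
    (hζ_mem : ∀ n, m ≤ n → x ∈ sampleSet z n ω → ζ n ω x = f x)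
    (hζ : ∀ n, m ≤ n → x ∉ sampleSet z n ω → ∃ U : Finset X,
      U.card = m ∧ ↑U ⊆ sampleSet z n ω ∧
      (∀ u ∈ U, ∀ s ∈ sampleSet z n ω, s ∉ U → dist x u ≤ dist x s) ∧
      (∀ W : Finset X, W.card = m → ↑W ⊆ sampleSet z n ω →
        (∀ u ∈ W, ∀ s ∈ sampleSet z n ω, s ∉ W → dist x u ≤ dist x s) →
        modeFreq f (↑U : Set X) ≤ modeFreq f (↑W : Set X)) ∧
      ((↑U : Set X) ∩ f ⁻¹' {ζ n ω x}).ncard = modeFreq f (↑U : Set X)) :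
    ∀ᶠ n in atTop, ζ n ω x = f x := by
  classical
  by_cases hxz : ∃ k, 1 ≤ k ∧ z k ω = x
  · obtain ⟨k, hk1, hkx⟩ := hxz
    filter_upwards [eventually_ge_atTop (max k m)] with n hn
    exact hζ_mem n (le_trans (le_max_right _ _) hn)
      ⟨k, hk1, le_trans (le_max_left _ _) hn, hkx⟩
  push_neg at hxz
  -- build m distinct samples in ball x ε
  have hrec : ∀ j : ℕ, ∃ (S : Finset X) (N : ℕ), S.card = j ∧
      (∀ s ∈ S, dist x s < ε ∧ s ≠ x) ∧
      (∀ s ∈ S, ∃ k, 1 ≤ k ∧ k ≤ N ∧ z k ω = s) := by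
    intro j
    induction j with
    | zero => exact ⟨∅, 0, by simp, by simp, by simp⟩
    | succ j ih =>
      obtain ⟨S, N, hcard, hprop, hidx⟩ := ih
      set D : Finset ℝ := insert ε (S.image (fun s => dist x s)) with hD
      have hDne : D.Nonempty := ⟨ε, Finset.mem_insert_self _ _⟩
      set δ : ℝ := D.min' hDne with hδ
      have hδpos : 0 < δ := by
        have : ∀ r ∈ D, 0 < r := by
          intro r hr
          rcases Finset.mem_insert.1 hr with rfl | hr
          · exact hε
          · obtain ⟨s, hs, rfl⟩ := Finset.mem_image.1 hr
            exact dist_pos.2 fun h => (hprop s hs).2 h.symm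
        exact this _ (D.min'_mem hDne)
      have hδε : δ ≤ ε := Finset.min'_le _ _ (Finset.mem_insert_self _ _)
      obtain ⟨k, hk1, hkball⟩ := hnear δ hδpos
      set s' := z k ω with hs'
      have hds' : dist x s' < δ := by
        rw [dist_comm]; exact mem_ball.1 hkball
      have hs'S : s' ∉ S := by
        intro hmem
        have : δ ≤ dist x s' := Finset.min'_le _ _
          (Finset.mem_insert_of_mem (Finset.mem_image_of_mem _ hmem))
        linarith
      refine ⟨insert s' S, max N k, ?_, ?_, ?_⟩
      · rw [Finset.card_insert_of_notMem hs'S, hcard]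
      · intro s hs
        rcases Finset.mem_insert.1 hs with rfl | hs
        · exact ⟨lt_of_lt_of_le hds' hδε, fun h => hxz k hk1 h⟩
        · exact hprop s hs
      · intro s hs
        rcases Finset.mem_insert.1 hs with rfl | hs
        · exact ⟨k, hk1, le_max_right _ _, rfl⟩
        · obtain ⟨k', h1, h2, h3⟩ := hidx s hs
          exact ⟨k', h1, le_trans h2 (le_max_left _ _), h3⟩
  obtain ⟨S, N, hcard, hprop, hidx⟩ := hrec m
  filter_upwards [eventually_ge_atTop (max N m)] with n hn
  have hnm : m ≤ n := le_trans (le_max_right _ _) hn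
  have hnN : N ≤ n := le_trans (le_max_left _ _) hn
  have hxnot : x ∉ sampleSet z n ω := by
    rintro ⟨k, hk1, _, hzk⟩
    exact hxz k hk1 hzk
  obtain ⟨U, hUcard, hUsub, hUnear, _, hUmode⟩ := hζ n hnm hxnot
  have hSsub : ∀ s ∈ S, s ∈ sampleSet z n ω := by
    intro s hs
    obtain ⟨k, h1, h2, h3⟩ := hidx s hs
    exact ⟨k, h1, le_trans h2 hnN, h3⟩
  -- U is contained in the ball
  have hUball : ∀ u ∈ U, dist x u < ε := by
    intro u hu
    by_contra hcon
    push_neg at hcon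
    have huS : u ∉ S := fun h => absurd (hprop u h).1 (not_lt.2 hcon)
    have : ∃ s ∈ S, s ∉ U := by
      by_contra hall
      push_neg at hall
      have hsub : insert u S ⊆ U := by
        intro v hv
        rcases Finset.mem_insert.1 hv with rfl | hv
        · exact hu
        · exact hall v hv
      have := Finset.card_le_card hsub
      rw [Finset.card_insert_of_notMem huS, hcard, hUcard] at this
      omega
    obtain ⟨s, hsS, hsU⟩ := this
    have := hUnear u hu s (hSsub s hsS) hsU
    have := (hprop s hsS).1
    linarith
  have hUf : ∀ u ∈ U, f u = f x := by
    intro u hu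
    obtain ⟨k, hk1, _, hzk⟩ := hUsub hu
    rw [← hzk]
    exact hfval k hk1 (by rw [mem_ball, dist_comm, hzk]; exact hUball u hu)
  have hYne : Nonempty Y := ⟨f x⟩
  have hfin : (↑U : Set X).Finite := U.finite_toSet
  have hub : ∀ y : Y, ((↑U : Set X) ∩ f ⁻¹' {y}).ncard ≤ m := fun y => by
    calc ((↑U : Set X) ∩ f ⁻¹' {y}).ncard ≤ (↑U : Set X).ncard :=
          Set.ncard_le_ncard Set.inter_subset_left hfin
      _ = m := by rw [Set.ncard_coe_finset, hUcard]
  have hUeq : (↑U : Set X) ∩ f ⁻¹' {f x} = ↑U := by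
    apply Set.inter_eq_self_of_subset_left
    intro u hu
    exact hUf u hu
  have hmode : modeFreq f (↑U : Set X) = m := by
    refine le_antisymm (ciSup_le hub) ?_
    have h1 : ((↑U : Set X) ∩ f ⁻¹' {f x}).ncard = m := by
      rw [hUeq, Set.ncard_coe_finset, hUcard]
    rw [← h1]
    exact le_ciSup ⟨m, by rintro _ ⟨y, rfl⟩; exact hub y⟩ (f x)
  rw [hmode] at hUmode
  have hsub2 : (↑U : Set X) ∩ f ⁻¹' {ζ n ω x} = ↑U := by
    apply Set.eq_of_subset_of_ncard_le Set.inter_subset_left _ hfin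
    rw [hUmode, Set.ncard_coe_finset, hUcard]
  have hUne : U.Nonempty := Finset.card_pos.1 (by omega)
  obtain ⟨u, hu⟩ := hUne
  have : u ∈ (↑U : Set X) ∩ f ⁻¹' {ζ n ω x} := hsub2.symm ▸ hu
  have := this.2
  simp only [Set.mem_preimage, Set.mem_singleton_iff] at this
  rw [← this, hUf u hu]


/-- **The distance-to-sample-set heuristic under the `m` nearest neighbors
rule.** Fix `m > 1`. If the samples are generated by the selective sampling
process `S(κ, Φ)` with `Φ(x,S) = d(x,S)` and `∑ ρ^{κ(n)} = ∞` for all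
`0 < ρ ≤ 1`, then at every point `x` of the support of `μ` that is not an
`f`-boundary point, the `m` nearest neighbors predictions `ζ_n(x)` converge to
`f(x)` with probability one. -/
theorem dist_heuristic_mNN_pointwise_convergence
    {X : Type*} [MetricSpace X] [MeasurableSpace X] [BorelSpace X]
    {Y : Type*} [Countable Y]
    (μ : Measure X) [IsProbabilityMeasure μ] (f : X → Y)
    {Ω : Type*} [MeasurableSpace Ω] (P : Measure Ω) [IsProbabilityMeasure P]
    (m : ℕ) (hm : 1 < m)
    -- the candidate-count function κ : ℕ⁺ → ℕ⁺ (κ (n+1) candidates at step n+1)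
    (κ : ℕ → ℕ) (hκpos : ∀ n, 1 ≤ κ n)
    (hκ : ∀ ρ : ℝ, 0 < ρ → ρ ≤ 1 →
      Tendsto (fun N => ∑ n ∈ Finset.Icc 1 N, ρ ^ κ n) atTop atTop)
    -- at step n+1, κ(n+1) candidates are drawn, iid with law μ
    (cand : (n : ℕ) → Fin (κ (n + 1)) → Ω → X)
    (hmeas : ∀ n i, Measurable (cand n i))
    (hlaw : ∀ n i, P.map (cand n i) = μ)
    (hindep : iIndepFun
      (m := fun _ : Σ n : ℕ, Fin (κ (n + 1)) => (inferInstance : MeasurableSpace X))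
      (fun p => cand p.1 p.2) P)
    -- the sample z_{n+1} is a candidate maximizing the heuristic Φ(·, Z_n)
    (z : ℕ → Ω → X)
    (hsel : ∀ ω n, ∃ i : Fin (κ (n + 1)), z (n + 1) ω = cand n i ω ∧
      ∀ j : Fin (κ (n + 1)),
        infDist (cand n j ω) (sampleSet z n ω) ≤
          infDist (cand n i ω) (sampleSet z n ω))
    -- ζ_n is an m nearest neighbors prediction over Z_n: on the most ambiguous
    -- m-set of nearest samples, predict a modal f-value (ties broken arbitrarily)
    (ζ : ℕ → Ω → X → Y)
    (hζ_mem : ∀ ω x n, m ≤ n → x ∈ sampleSet z n ω → ζ n ω x = f x)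
    (hζ : ∀ ω x n, m ≤ n → x ∉ sampleSet z n ω → ∃ U : Finset X,
      U.card = m ∧ ↑U ⊆ sampleSet z n ω ∧
      (∀ u ∈ U, ∀ s ∈ sampleSet z n ω, s ∉ U → dist x u ≤ dist x s) ∧
      (∀ W : Finset X, W.card = m → ↑W ⊆ sampleSet z n ω →
        (∀ u ∈ W, ∀ s ∈ sampleSet z n ω, s ∉ W → dist x u ≤ dist x s) →
        modeFreq f (↑U : Set X) ≤ modeFreq f (↑W : Set X)) ∧
      ((↑U : Set X) ∩ f ⁻¹' {ζ n ω x}).ncard = modeFreq f (↑U : Set X))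
    (x : X) (hx : x ∈ measSupport μ) (hxb : ¬ IsFBoundaryPoint f μ x) :
    ∀ᵐ ω ∂P, ∀ᶠ n in atTop, ζ n ω x = f x := by
  classical
  rw [IsFBoundaryPoint] at hxb
  push_neg at hxb
  obtain ⟨ε, hε, hμ0⟩ := hxb
  have hμ0' : μ (ball x ε ∩ {x' | f x' ≠ f x}) = 0 := le_antisymm hμ0 zero_le
  set Nset : Set X := ball x ε ∩ {x' | f x' ≠ f x} with hNset
  set N' : Set X := toMeasurable μ Nset with hN'
  have hN'meas : MeasurableSet N' := measurableSet_toMeasurable μ Nset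
  have hμN' : μ N' = 0 := by rw [hN', measure_toMeasurable]; exact hμ0'
  have h_null : ∀ᵐ ω ∂P, ∀ p : Σ n : ℕ, Fin (κ (n + 1)), cand p.1 p.2 ω ∉ N' := by
    rw [ae_all_iff]
    intro p
    rw [ae_iff]
    have heq : {ω | ¬ cand p.1 p.2 ω ∉ N'} = cand p.1 p.2 ⁻¹' N' := by
      ext ω; simp [Set.mem_preimage]
    rw [heq, ← Measure.map_apply (hmeas p.1 p.2) hN'meas, hlaw p.1 p.2, hμN']
  have h_ball : ∀ᵐ ω ∂P, ∀ q : ℚ, 0 < q →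
      ∃ᶠ n in atTop, ∀ i, cand n i ω ∈ ball x (q : ℝ) := by
    rw [ae_all_iff]
    intro q
    by_cases hq : 0 < q
    · have hq' : (0 : ℝ) < (q : ℝ) := by exact_mod_cast hq
      filter_upwards [aux_freq μ P κ hκ cand hmeas hlaw hindep (ball x (q : ℝ))
        measurableSet_ball (hx (q : ℝ) hq')] with ω h _
      exact h
    · filter_upwards with ω hq'
      exact absurd hq' hq
  filter_upwards [h_null, h_ball] with ω h1 h2
  refine det_lemma f m hm z ζ ω x ε hε ?_ ?_ (fun n hn => hζ_mem ω x n hn)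
    (fun n hn => hζ ω x n hn)
  · intro δ hδ
    obtain ⟨q, hq0, hqδ⟩ := exists_rat_btwn hδ
    have hq : 0 < q := by exact_mod_cast hq0
    obtain ⟨n, hn⟩ := (h2 q hq).exists
    obtain ⟨i, hzi, -⟩ := hsel ω n
    refine ⟨n + 1, le_add_self, ?_⟩
    rw [hzi]
    exact ball_subset_ball hqδ.le (hn i)
  · intro k hk1 hkball
    obtain ⟨j, rfl⟩ : ∃ j, k = j + 1 := ⟨k - 1, by omega⟩
    obtain ⟨i, hzi, -⟩ := hsel ω j
    have hnot : z (j + 1) ω ∉ Nset := by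
      rw [hzi]
      exact fun h => h1 ⟨j, i⟩ (subset_toMeasurable μ Nset h)
    by_contra hne
    exact hnot ⟨hkball, hne⟩
end

section
/- Fix integers m > 1 and K > ⌊m/2⌋ with K ≥ 2. Let {z_n} be generated by the selective sampling process S(κ,Φ) where κ satisfies Σ_{n=1}^∞ ρ^{κ(n)} = ∞ for every 0 < ρ ≤ 1, and Φ is the non-modal count heuristic Φ(x,S) = |V_S(x)| − modefreq_f(V_S(x)) with V_S(x) the K-nearest neighbors of x with respect to S. If x ∈ X is contained in an f-contiguous component of positive μ-measure, then the m nearest neighbors predictions satisfy ζ_n(x) → f(x) with probability one. -/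
open MeasureTheory ProbabilityTheory Filter Metric

section Helpers

open Set MeasureTheory
open scoped ENNReal

variable {X : Type*} [MetricSpace X] [MeasurableSpace X] [BorelSpace X]
variable {Ω : Type*} [MeasurableSpace Ω]

/-- Candidates almost surely avoid a `μ`-null set. -/
lemma ae_cand_avoid (P : Measure Ω) (μ : Measure X) (κ : ℕ → ℕ)
    (cand : (n : ℕ) → Fin (κ (n + 1)) → Ω → X)
    (hmeas : ∀ n i, Measurable (cand n i))
    (hlaw : ∀ n i, P.map (cand n i) = μ)
    {N : Set X} (hN : μ N = 0) :
    ∀ᵐ ω ∂P, ∀ n i, cand n i ω ∉ N := by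
  rw [ae_all_iff]
  intro n
  rw [ae_all_iff]
  intro i
  have h0 : P (cand n i ⁻¹' N) = 0 := by
    refine le_antisymm ?_ (zero_le)
    calc P (cand n i ⁻¹' N) ≤ (P.map (cand n i)) N :=
          Measure.le_map_apply (hmeas n i).aemeasurable N
      _ = 0 := by rw [hlaw n i, hN]
  rw [ae_iff]
  simpa using (show P {a | cand n i a ∈ N} = 0 from h0)

/-- Second Borel–Cantelli: frequently, all candidates of a step land in a fixed
positive-measure set. -/
lemma freq_all_cand_mem (P : Measure Ω) [IsProbabilityMeasure P]
    (μ : Measure X) [IsProbabilityMeasure μ] (κ : ℕ → ℕ)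
    (hκ : ∀ ρ : ℝ, 0 < ρ → ρ ≤ 1 →
      Filter.Tendsto (fun N => ∑ n ∈ Finset.Icc 1 N, ρ ^ κ n) Filter.atTop Filter.atTop)
    (cand : (n : ℕ) → Fin (κ (n + 1)) → Ω → X)
    (hmeas : ∀ n i, Measurable (cand n i))
    (hlaw : ∀ n i, P.map (cand n i) = μ)
    (hindep : iIndepFun
      (m := fun _ : Σ n : ℕ, Fin (κ (n + 1)) => (inferInstance : MeasurableSpace X))
      (fun p => cand p.1 p.2) P)
    {A : Set X} (hA : MeasurableSet A) (hApos : 0 < μ A) :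
    ∀ᵐ ω ∂P, ∃ᶠ n in Filter.atTop, ∀ i : Fin (κ (n + 1)), cand n i ω ∈ A := by
  classical
  set E : ℕ → Set Ω := fun n => ⋂ i : Fin (κ (n + 1)), cand n i ⁻¹' A with hE
  have hEmeas : ∀ n, MeasurableSet (E n) := fun n =>
    MeasurableSet.iInter fun i => (hmeas n i) hA
  have hone : ∀ n (i : Fin (κ (n + 1))), P (cand n i ⁻¹' A) = μ A := fun n i => by
    rw [← hlaw n i, Measure.map_apply (hmeas n i) hA]
  have key : ∀ s : Finset ℕ, P (⋂ n ∈ s, E n) = ∏ n ∈ s, (μ A) ^ κ (n + 1) := by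
    intro s
    have hset : (⋂ n ∈ s, E n)
        = ⋂ p ∈ s.sigma (fun n => (Finset.univ : Finset (Fin (κ (n + 1))))),
            (fun ω => cand p.1 p.2 ω) ⁻¹' A := by
      ext ω
      constructor
      · intro h
        refine Set.mem_iInter₂.2 ?_
        rintro ⟨n, i⟩ hp
        have hm := Set.mem_iInter₂.1 h n (Finset.mem_sigma.1 hp).1
        exact Set.mem_iInter.1 hm i
      · intro h
        refine Set.mem_iInter₂.2 fun n hn => Set.mem_iInter.2 fun i => ?_
        exact Set.mem_iInter₂.1 h ⟨n, i⟩ (Finset.mem_sigma.2 ⟨hn, Finset.mem_univ i⟩)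
    rw [hset, hindep.measure_inter_preimage_eq_mul
      (s.sigma fun n => (Finset.univ : Finset (Fin (κ (n + 1)))))
      (sets := fun _ => A) (fun _ _ => hA), Finset.prod_sigma]
    refine Finset.prod_congr rfl fun n _ => ?_
    simp [hone n, Finset.prod_const]
  have hPE : ∀ n, P (E n) = (μ A) ^ κ (n + 1) := by
    intro n
    have := key {n}
    simpa using this
  have hInd : iIndepSet E P := by
    rw [iIndepSet_iff_meas_biInter hEmeas]
    intro s
    rw [key s]
    exact Finset.prod_congr rfl fun n _ => (hPE n).symm
  have htsum : (∑' n, P (E n)) = ⊤ := by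
    by_contra hfin
    set ρ : ℝ := (μ A).toReal with hρdef
    have hAne : μ A ≠ ∞ := measure_ne_top μ A
    have hρpos : 0 < ρ := ENNReal.toReal_pos hApos.ne' hAne
    have hρle : ρ ≤ 1 := by
      have h1 : μ A ≤ 1 := prob_le_one
      calc ρ ≤ (1 : ℝ≥0∞).toReal := ENNReal.toReal_mono ENNReal.one_ne_top h1
        _ = 1 := by simp
    set C : ℝ := (∑' n, P (E n)).toReal with hCdef
    have hbound : ∀ N : ℕ, ∑ n ∈ Finset.Icc 1 N, ρ ^ κ n ≤ C := by
      intro N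
      have hsum : ∑ n ∈ Finset.range N, P (E n) ≤ ∑' n, P (E n) :=
        ENNReal.sum_le_tsum _
      have h2 : (∑ n ∈ Finset.range N, P (E n)).toReal ≤ C :=
        ENNReal.toReal_mono hfin hsum
      have h3 : (∑ n ∈ Finset.range N, P (E n)).toReal
          = ∑ n ∈ Finset.range N, ρ ^ κ (n + 1) := by
        rw [ENNReal.toReal_sum (fun n _ => by
          rw [hPE n]; exact ENNReal.pow_ne_top hAne)]
        refine Finset.sum_congr rfl fun n _ => ?_
        rw [hPE n, ENNReal.toReal_pow]
      have h4 : ∑ n ∈ Finset.Icc 1 N, ρ ^ κ n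
          = ∑ n ∈ Finset.range N, ρ ^ κ (n + 1) := by
        clear h2 h3 hsum
        induction N with
        | zero => simp
        | succ n ih =>
          rw [Finset.sum_Icc_succ_top (Nat.succ_le_succ (Nat.zero_le n)),
            Finset.sum_range_succ, ih]
      rw [h4, ← h3]
      exact h2
    obtain ⟨N, hN⟩ := ((hκ ρ hρpos hρle).eventually (Filter.eventually_gt_atTop C)).exists
    exact absurd (hbound N) (not_le.2 hN)
  have h1 := ProbabilityTheory.measure_limsup_eq_one hEmeas hInd htsum
  have hlim : ∀ᵐ ω ∂P, ω ∈ Filter.limsup E Filter.atTop := by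
    rw [ae_iff]
    have hms : MeasurableSet (Filter.limsup E Filter.atTop) := MeasurableSet.measurableSet_limsup hEmeas
    have : {ω | ¬ ω ∈ Filter.limsup E Filter.atTop} = (Filter.limsup E Filter.atTop)ᶜ := rfl
    rw [this]
    exact (prob_compl_eq_zero_iff hms).2 h1
  filter_upwards [hlim] with ω hω
  rw [Filter.mem_limsup_iff_frequently_mem] at hω
  exact hω.mono fun n hn => by
    intro i
    exact Set.mem_iInter.1 hn i

/-- If `x` is not an atom but all its balls have positive measure, then inside any
ball around `x` we can find `m` pairwise disjoint sets of positive measure. -/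
lemma exists_disjoint_annuli (μ : Measure X) (x : X)
    (hx : ∀ r > 0, 0 < μ (Metric.ball x r)) (hatom : μ {x} = 0)
    {ε : ℝ} (hε : 0 < ε) (m : ℕ) :
    ∃ A : Fin m → Set X, (∀ i, MeasurableSet (A i)) ∧ (∀ i, A i ⊆ Metric.ball x ε) ∧
      (∀ i, 0 < μ (A i)) ∧ ∀ i j, i ≠ j → Disjoint (A i) (A j) := by
  classical
  have step : ∀ r : ℝ, 0 < r →
      ∃ r', 0 < r' ∧ r' < r ∧ 0 < μ (Metric.ball x r \ Metric.ball x r') := by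
    intro r hr
    have hsub : Metric.ball x r ⊆ (Metric.ball x r \ {x}) ∪ {x} := by
      intro y hy
      by_cases h : y = x
      · exact Or.inr (by simp [h])
      · exact Or.inl ⟨hy, h⟩
    have hdiff : 0 < μ (Metric.ball x r \ {x}) := by
      by_contra h
      push_neg at h
      have h0 : μ (Metric.ball x r \ {x}) = 0 := le_antisymm (by simpa using h) (zero_le)
      have hball : μ (Metric.ball x r) = 0 := by
        refine le_antisymm ?_ (zero_le)
        calc μ (Metric.ball x r) ≤ μ ((Metric.ball x r \ {x}) ∪ {x}) := measure_mono hsub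
          _ ≤ μ (Metric.ball x r \ {x}) + μ {x} := measure_union_le _ _
          _ = 0 := by rw [h0, hatom, add_zero]
      exact absurd hball (hx r hr).ne'
    have hcover : Metric.ball x r \ {x}
        ⊆ ⋃ k : ℕ, (Metric.ball x r \ Metric.ball x (1 / (k + 1))) := by
      rintro y ⟨hy, hyx⟩
      have hd : 0 < dist y x := dist_pos.2 (by simpa using hyx)
      obtain ⟨k, hk⟩ := exists_nat_one_div_lt hd
      refine Set.mem_iUnion.2 ⟨k, hy, fun hmem => ?_⟩
      exact absurd (Metric.mem_ball.1 hmem) (not_lt.2 hk.le)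
    have hex : ∃ k : ℕ, 0 < μ (Metric.ball x r \ Metric.ball x (1 / (k + 1))) := by
      by_contra h
      push_neg at h
      have h0 : μ (⋃ k : ℕ, (Metric.ball x r \ Metric.ball x (1 / (k + 1)))) = 0 :=
        measure_iUnion_null fun k => le_antisymm (by simpa using h k) (zero_le)
      exact hdiff.ne' (le_antisymm ((measure_mono hcover).trans h0.le) (zero_le))
    obtain ⟨k, hk⟩ := hex
    refine ⟨1 / (k + 1), by positivity, ?_, hk⟩
    obtain ⟨y, hy⟩ := nonempty_of_measure_ne_zero hk.ne'
    have h1 : (1 : ℝ) / (k + 1) ≤ dist y x :=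
      not_lt.1 fun h => hy.2 (Metric.mem_ball.2 h)
    exact h1.trans_lt (Metric.mem_ball.1 hy.1)
  let g : {s : ℝ // 0 < s} → {s : ℝ // 0 < s} :=
    fun s => ⟨(step s.1 s.2).choose, (step s.1 s.2).choose_spec.1⟩
  let r : ℕ → {s : ℝ // 0 < s} := fun n => g^[n] ⟨ε, hε⟩
  have hrs : ∀ n, r (n + 1) = g (r n) := fun n => Function.iterate_succ_apply' g n _
  have hlt : ∀ n, (r (n + 1)).1 < (r n).1 := fun n => by
    rw [hrs]; exact (step (r n).1 (r n).2).choose_spec.2.1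
  have hpos : ∀ n, 0 < μ (Metric.ball x (r n).1 \ Metric.ball x (r (n + 1)).1) := fun n => by
    rw [hrs]; exact (step (r n).1 (r n).2).choose_spec.2.2
  have hanti : Antitone fun n => (r n).1 := antitone_nat_of_succ_le fun n => (hlt n).le
  have hr0 : (r 0).1 = ε := rfl
  refine ⟨fun i => Metric.ball x (r (i : ℕ)).1 \ Metric.ball x (r ((i : ℕ) + 1)).1,
    fun i => measurableSet_ball.diff measurableSet_ball, fun i => ?_, fun i => hpos _, ?_⟩
  · refine Set.diff_subset.trans (Metric.ball_subset_ball ?_)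
    rw [← hr0]
    exact hanti (Nat.zero_le _)
  · have hdis : ∀ i j : Fin m, (i : ℕ) < (j : ℕ) →
        Disjoint (Metric.ball x (r (i : ℕ)).1 \ Metric.ball x (r ((i : ℕ) + 1)).1)
          (Metric.ball x (r (j : ℕ)).1 \ Metric.ball x (r ((j : ℕ) + 1)).1) := by
      intro i j hij
      rw [Set.disjoint_left]
      rintro y ⟨-, hy2⟩ ⟨hy3, -⟩
      exact hy2 (Metric.ball_subset_ball (hanti hij) hy3)
    intro i j hij
    rcases lt_or_gt_of_ne (fun h : (i : ℕ) = (j : ℕ) => hij (Fin.ext h)) with h | h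
    · exact hdis i j h
    · exact (hdis j i h).symm

end Helpers

/-- **The `K`-nearest neighbor non-modal count heuristic under the `m` nearest
neighbors rule.** Fix `m > 1` and `K ≥ 2` with `K > ⌊m/2⌋`. If the samples are
generated by the selective sampling process `S(κ, Φ)` with
`Φ(x,S) = |V_S(x)| − modefreq_f(V_S(x))` (`V_S(x)` the `K`-nearest neighbors)
and `∑ ρ^{κ(n)} = ∞` for all `0 < ρ ≤ 1`, then at every point `x` contained in
an `f`-contiguous component of positive measure, the `m` nearest neighbors
predictions `ζ_n(x)` converge to `f(x)` with probability one. -/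
theorem nmc_knn_mNN_pointwise_convergence
    {X : Type*} [MetricSpace X] [MeasurableSpace X] [BorelSpace X]
    {Y : Type*} [Countable Y]
    (μ : Measure X) [IsProbabilityMeasure μ] (f : X → Y)
    {Ω : Type*} [MeasurableSpace Ω] (P : Measure Ω) [IsProbabilityMeasure P]
    (m : ℕ) (hm : 1 < m)
    (K : ℕ) (hK : 2 ≤ K) (hKm : m / 2 < K)
    -- the candidate-count function κ : ℕ⁺ → ℕ⁺ (κ (n+1) candidates at step n+1)
    (κ : ℕ → ℕ) (hκpos : ∀ n, 1 ≤ κ n)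
    (hκ : ∀ ρ : ℝ, 0 < ρ → ρ ≤ 1 →
      Tendsto (fun N => ∑ n ∈ Finset.Icc 1 N, ρ ^ κ n) atTop atTop)
    -- at step n+1, κ(n+1) candidates are drawn, iid with law μ
    (cand : (n : ℕ) → Fin (κ (n + 1)) → Ω → X)
    (hmeas : ∀ n i, Measurable (cand n i))
    (hlaw : ∀ n i, P.map (cand n i) = μ)
    (hindep : iIndepFun
      (m := fun _ : Σ n : ℕ, Fin (κ (n + 1)) => (inferInstance : MeasurableSpace X))
      (fun p => cand p.1 p.2) P)
    -- the sample z_{n+1} is a candidate maximizing the heuristic Φ(·, Z_n)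
    (z : ℕ → Ω → X)
    (hsel : ∀ ω n, ∃ i : Fin (κ (n + 1)), z (n + 1) ω = cand n i ω ∧
      ∀ j : Fin (κ (n + 1)),
        nmcKNN f K (cand n j ω) (sampleSet z n ω) ≤
          nmcKNN f K (cand n i ω) (sampleSet z n ω))
    -- ζ_n is an m nearest neighbors prediction over Z_n: on the most ambiguous
    -- m-set of nearest samples, predict a modal f-value (ties broken arbitrarily)
    (ζ : ℕ → Ω → X → Y)
    (hζ_mem : ∀ ω x n, m ≤ n → x ∈ sampleSet z n ω → ζ n ω x = f x)
    (hζ : ∀ ω x n, m ≤ n → x ∉ sampleSet z n ω → ∃ U : Finset X,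
      U.card = m ∧ ↑U ⊆ sampleSet z n ω ∧
      (∀ u ∈ U, ∀ s ∈ sampleSet z n ω, s ∉ U → dist x u ≤ dist x s) ∧
      (∀ W : Finset X, W.card = m → ↑W ⊆ sampleSet z n ω →
        (∀ u ∈ W, ∀ s ∈ sampleSet z n ω, s ∉ W → dist x u ≤ dist x s) →
        modeFreq f (↑U : Set X) ≤ modeFreq f (↑W : Set X)) ∧
      ((↑U : Set X) ∩ f ⁻¹' {ζ n ω x}).ncard = modeFreq f (↑U : Set X))
    (x : X) (C : Set X) (hC : IsFContiguousComponent f μ C) (hxC : x ∈ C)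
    (hCpos : 0 < μ C) :
    ∀ᵐ ω ∂P, ∀ᶠ n in atTop, ζ n ω x = f x := by
  classical
  obtain ⟨⟨hconn, hconst, hsupp, hbd⟩, hmax⟩ := hC
  have hxsupp : ∀ r > 0, 0 < μ (ball x r) := hsupp hxC
  have hnb : ¬ IsFBoundaryPoint f μ x := hbd x hxC
  rw [IsFBoundaryPoint] at hnb
  push_neg at hnb
  obtain ⟨ε, hε, hNle⟩ := hnb
  have hNnull : μ (ball x ε ∩ {y | f y ≠ f x}) = 0 := le_antisymm hNle (zero_le)
  have hG1 := ae_cand_avoid P μ κ cand hmeas hlaw hNnull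
  by_cases hatom : μ {x} = 0
  · -- x is not an atom: find m disjoint positive-measure pieces in the ball
    obtain ⟨A, hAmeas, hAsub, hApos, hAdisj⟩ :=
      exists_disjoint_annuli μ x hxsupp hatom hε m
    have hGs : ∀ᵐ ω ∂P, ∀ i : Fin m,
        ∃ᶠ n in atTop, ∀ j : Fin (κ (n + 1)), cand n j ω ∈ A i := by
      rw [ae_all_iff]
      intro i
      exact freq_all_cand_mem P μ κ hκ cand hmeas hlaw hindep (hAmeas i) (hApos i)
    filter_upwards [hG1, hGs] with ω hω1 hωs
    have hpick : ∀ i : Fin m, ∃ n : ℕ, z (n + 1) ω ∈ A i := by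
      intro i
      obtain ⟨n, hn⟩ := (hωs i).exists
      obtain ⟨j, hj, -⟩ := hsel ω n
      exact ⟨n, by rw [hj]; exact hn j⟩
    choose ns hns using hpick
    set p : Fin m → X := fun i => z (ns i + 1) ω with hp
    rw [eventually_atTop]
    refine ⟨max m ((Finset.univ.sup fun i => ns i) + 1), fun n hn => ?_⟩
    have hmn : m ≤ n := le_trans (le_max_left _ _) hn
    by_cases hxs : x ∈ sampleSet z n ω
    · exact hζ_mem ω x n hmn hxs
    obtain ⟨U, hUcard, hUsub, hUnear, -, hUmode⟩ := hζ ω x n hmn hxs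
    have hpmem : ∀ i, p i ∈ sampleSet z n ω := by
      intro i
      refine ⟨ns i + 1, Nat.succ_le_succ (Nat.zero_le _), ?_, rfl⟩
      have h1 : ns i + 1 ≤ (Finset.univ.sup fun i => ns i) + 1 :=
        Nat.succ_le_succ (Finset.le_sup (Finset.mem_univ i))
      exact h1.trans (le_trans (le_max_right _ _) hn)
    have hpball : ∀ i, p i ∈ ball x ε := fun i => hAsub i (hns i)
    have hpinj : Function.Injective p := by
      intro i j hij
      by_contra hne
      refine Set.disjoint_left.1 (hAdisj i j hne) (hns i) ?_
      show p i ∈ A j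
      rw [hij]
      exact hns j
    have hUball : ∀ u ∈ U, u ∈ ball x ε := by
      intro u hu
      by_contra hub
      have hexj : ∃ j, p j ∉ U := by
        by_contra hall
        push_neg at hall
        have hTsub : Finset.image p Finset.univ ⊆ U :=
          Finset.image_subset_iff.2 fun j _ => hall j
        have hTcard : (Finset.image p Finset.univ).card = m := by
          rw [Finset.card_image_of_injective _ hpinj, Finset.card_univ, Fintype.card_fin]
        have hpU : Finset.image p Finset.univ = U :=
          Finset.eq_of_subset_of_card_le hTsub (by rw [hTcard, hUcard])
        obtain ⟨j, -, hj⟩ := Finset.mem_image.1 (hpU ▸ hu)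
        exact hub (hj ▸ hpball j)
      obtain ⟨j, hj⟩ := hexj
      have hle := hUnear u hu (p j) (hpmem j) hj
      refine hub (mem_ball.2 ?_)
      calc dist u x = dist x u := dist_comm _ _
        _ ≤ dist x (p j) := hle
        _ = dist (p j) x := dist_comm _ _
        _ < ε := mem_ball.1 (hpball j)
    have hUlab : ∀ u ∈ U, f u = f x := by
      intro u hu
      obtain ⟨k, hk1, hkn, hzk⟩ := hUsub hu
      obtain ⟨k', rfl⟩ : ∃ k', k = k' + 1 := ⟨k - 1, (Nat.succ_pred_eq_of_pos hk1).symm⟩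
      obtain ⟨i, hi, -⟩ := hsel ω k'
      have hcand : u = cand k' i ω := by rw [← hzk, hi]
      have havoid := hω1 k' i
      rw [← hcand] at havoid
      by_contra hne
      exact havoid ⟨hUball u hu, hne⟩
    have hUfin : (↑U : Set X).Finite := U.finite_toSet
    have hUm : (↑U : Set X).ncard = m := by rw [Set.ncard_coe_finset, hUcard]
    have hsubpre : (↑U : Set X) ⊆ f ⁻¹' {f x} := fun u hu => hUlab u hu
    have hub2 : ∀ y : Y, ((↑U : Set X) ∩ f ⁻¹' {y}).ncard ≤ m := fun y =>
      hUm ▸ Set.ncard_le_ncard Set.inter_subset_left hUfin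
    have : Nonempty Y := ⟨f x⟩
    have hmf : modeFreq f (↑U : Set X) = m := by
      refine le_antisymm (ciSup_le hub2) ?_
      have hfx : ((↑U : Set X) ∩ f ⁻¹' {f x}).ncard = m := by
        rw [Set.inter_eq_self_of_subset_left hsubpre, hUm]
      calc m = ((↑U : Set X) ∩ f ⁻¹' {f x}).ncard := hfx.symm
        _ ≤ modeFreq f (↑U : Set X) :=
            le_ciSup ⟨m, by rintro a ⟨y, rfl⟩; exact hub2 y⟩ (f x)
    rw [hmf] at hUmode
    have hUeq : (↑U : Set X) ∩ f ⁻¹' {ζ n ω x} = (↑U : Set X) :=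
      Set.eq_of_subset_of_ncard_le Set.inter_subset_left
        (by rw [hUm, hUmode]) hUfin
    obtain ⟨u, hu⟩ : ∃ u, u ∈ U := Finset.card_pos.1 (by omega)
    have humem : u ∈ (↑U : Set X) ∩ f ⁻¹' {ζ n ω x} := by
      rw [hUeq]
      exact hu
    have h1 : f u = ζ n ω x := humem.2
    exact h1.symm.trans (hUlab u hu)
  · -- x is an atom: x itself is eventually sampled
    have hxpos : 0 < μ {x} := lt_of_le_of_ne (zero_le) (Ne.symm hatom)
    have hGx := freq_all_cand_mem P μ κ hκ cand hmeas hlaw hindep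
      (measurableSet_singleton x) hxpos
    filter_upwards [hGx] with ω hω
    obtain ⟨n, hn⟩ := hω.exists
    obtain ⟨i, hi, -⟩ := hsel ω n
    have hzx : z (n + 1) ω = x := by rw [hi]; exact hn i
    rw [eventually_atTop]
    refine ⟨max m (n + 1), fun n' hn' => ?_⟩
    exact hζ_mem ω x n' (le_trans (le_max_left _ _) hn')
      ⟨n + 1, Nat.succ_le_succ (Nat.zero_le _), le_trans (le_max_right _ _) hn', hzx⟩
end
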